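/- arXiv:1510.05774 — 4 statements merged into one kernel-verified Lean document; each statement's English description precedes it below -/
import Mathlib

section
/- Let A = (V, V0, V1, E, v_I) be an arena and w : E → ℤ a weight function. Player 0 wins the game (A, AvgEnergy_L(w, t)) for some threshold t ∈ ℕ if, and only if, Player 0 wins the game (A, Energy_LU(w, cap)) for some capacity cap ∈ ℕ. -/
/-- An arena: a directed graph without terminal vertices, a set `V0` of Player 0's
vertices (Player 1 controls the complement), and an initial vertex. -/
structure Arena (V : Type) where
  V0 : Set V
  E : V → V → Prop
  vI : V
  succ : ∀ v, ∃ v', E v v'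

/-- A play: an infinite path starting in the initial vertex. -/
def Arena.Play {V : Type} (A : Arena V) (ρ : ℕ → V) : Prop :=
  ρ 0 = A.vI ∧ ∀ n, A.E (ρ n) (ρ (n + 1))

/-- The play prefix `ρ 0 ⋯ ρ n` as a list. -/
def prefixList {V : Type} (ρ : ℕ → V) (n : ℕ) : List V :=
  (List.range (n + 1)).map ρ

/-- A strategy for the player controlling the vertices in `p`. -/
def Arena.IsStrategy {V : Type} (A : Arena V) (p : Set V) (σ : List V → V) : Prop :=
  ∀ (h : List V) (v : V), v ∈ p → A.E v (σ (h ++ [v]))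

/-- Consistency of a play with a strategy of the player controlling `p`. -/
def Arena.ConsistentWith {V : Type} (A : Arena V) (p : Set V) (σ : List V → V) (ρ : ℕ → V) : Prop :=
  ∀ n, ρ n ∈ p → ρ (n + 1) = σ (prefixList ρ n)

/-- `σ` is a winning strategy for the player controlling `p` with objective `Obj`. -/
def Arena.WinningStrategy {V : Type} (A : Arena V) (p : Set V) (Obj : Set (ℕ → V))
    (σ : List V → V) : Prop :=
  A.IsStrategy p σ ∧ ∀ ρ, A.Play ρ → A.ConsistentWith p σ ρ → ρ ∈ Obj

/-- Player 0 wins the game `(A, Win)`. -/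
def Arena.Player0Wins {V : Type} (A : Arena V) (Win : Set (ℕ → V)) : Prop :=
  ∃ σ, A.WinningStrategy A.V0 Win σ

/-- `h` is a finite play prefix consistent with the strategy `σ` of the player controlling `p`. -/
def Arena.FinPrefix {V : Type} (A : Arena V) (p : Set V) (σ : List V → V) (h : List V) : Prop :=
  ∃ ρ n, A.Play ρ ∧ A.ConsistentWith p σ ρ ∧ h = prefixList ρ n

/-- A positional strategy only depends on the last vertex. -/
def Positional {X : Type} (σ : List X → X) : Prop :=
  ∀ (h : List X) (v : X), σ (h ++ [v]) = σ [v]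

/-- The energy level of the play prefix `ρ 0 ⋯ ρ n` is `EL w ρ n`:
the sum of the weights of its `n` edges. -/
def EL {V : Type} (w : V → V → ℤ) (ρ : ℕ → V) (n : ℕ) : ℤ :=
  ∑ i ∈ Finset.range n, w (ρ i) (ρ (i + 1))

/-- The energy level of a finite play prefix given as a list. -/
def ELl {V : Type} (w : V → V → ℤ) : List V → ℤ
  | [] => 0
  | [_] => 0
  | a :: b :: l => w a b + ELl w (b :: l)

/-- The average accumulated energy of the first `n` prefixes. -/
noncomputable def avgEL {V : Type} (w : V → V → ℤ) (ρ : ℕ → V) (n : ℕ) : ℝ :=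
  (∑ i ∈ Finset.range n, (EL w ρ i : ℝ)) / (n : ℝ)

/-- The lower-bounded energy objective. -/
def EnergyL {V : Type} (w : V → V → ℤ) : Set (ℕ → V) :=
  {ρ | ∀ n, 0 ≤ EL w ρ n}

/-- The lower- and upper-bounded energy objective. -/
def EnergyLU {V : Type} (w : V → V → ℤ) (cap : ℕ) : Set (ℕ → V) :=
  {ρ | ∀ n, 0 ≤ EL w ρ n ∧ EL w ρ n ≤ (cap : ℤ)}

/-- The average-energy objective: limsup of the averages is at most `t`. -/
def AvgE {V : Type} (w : V → V → ℤ) (t : ℝ) : Set (ℕ → V) :=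
  {ρ | Filter.limsup (fun n => (avgEL w ρ n : EReal)) Filter.atTop ≤ (t : EReal)}

/-- The lower-bounded average-energy objective. -/
def AvgEnergyL {V : Type} (w : V → V → ℤ) (t : ℝ) : Set (ℕ → V) :=
  EnergyL w ∩ AvgE w t

/-- The mean-payoff objective. -/
def MP {V : Type} (w : V → V → ℤ) (t : ℝ) : Set (ℕ → V) :=
  {ρ | Filter.limsup (fun n => (((EL w ρ n : ℝ) / (n : ℝ)) : EReal)) Filter.atTop ≤ (t : EReal)}

/-- A memory structure: initial memory state and update along edges. -/
structure Mem (V M : Type) where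
  mI : M
  upd : M → V → V → M

/-- Tracking the memory state along a play. -/
def Mem.track {V M : Type} (mem : Mem V M) (ρ : ℕ → V) : ℕ → M
  | 0 => mem.mI
  | n + 1 => mem.upd (Mem.track mem ρ n) (ρ n) (ρ (n + 1))

def Mem.runAux {V M : Type} (mem : Mem V M) : M → List V → M
  | m, [] => m
  | m, [_] => m
  | m, a :: b :: l => Mem.runAux mem (mem.upd m a b) (b :: l)

/-- `Upd⁺`: the memory state reached along a finite play prefix. -/
def Mem.run {V M : Type} (mem : Mem V M) (h : List V) : M :=
  Mem.runAux mem mem.mI h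

/-- The strategy `σ` is implemented by the memory structure `mem`
(via some next-move function). -/
def Arena.ImplementedBy {V M : Type} (A : Arena V) (mem : Mem V M) (σ : List V → V) : Prop :=
  ∃ nxt : V → M → V, ∀ (h : List V) (v : V), σ (h ++ [v]) = nxt v (mem.run (h ++ [v]))

/-- `σ` is a finite-state strategy of size `k`. -/
def Arena.FiniteStateOfSize {V : Type} (A : Arena V) (k : ℕ) (σ : List V → V) : Prop :=
  ∃ (M : Type) (inst : Fintype M) (mem : Mem V M),
    @Fintype.card M inst = k ∧ A.ImplementedBy mem σ

/-- The expanded arena `A × M`. -/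
def Arena.expand {V M : Type} (A : Arena V) (mem : Mem V M) : Arena (V × M) where
  V0 := {p | p.1 ∈ A.V0}
  E := fun p q => A.E p.1 q.1 ∧ q.2 = mem.upd p.2 p.1 q.1
  vI := (A.vI, mem.mI)
  succ := fun p => by
    obtain ⟨v', h⟩ := A.succ p.1
    exact ⟨(v', mem.upd p.2 p.1 v'), h, rfl⟩

/-- The extended play in `A × M` corresponding to a play in `A`. -/
def extendPlay {V M : Type} (mem : Mem V M) (ρ : ℕ → V) : ℕ → V × M :=
  fun n => (ρ n, Mem.track mem ρ n)

/-- `(A, Win) ≤_M (A × M, Win')`. -/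
def Reduces {V M : Type} (A : Arena V) (mem : Mem V M) (Win : Set (ℕ → V))
    (Win' : Set (ℕ → V × M)) : Prop :=
  ∀ ρ, A.Play ρ → (ρ ∈ Win ↔ extendPlay mem ρ ∈ Win')

/-- A recharge weight function (`none` is the recharge label `R`) assigns
non-positive weights to all (non-recharge) edges. -/
def RechargeWeights {V : Type} (A : Arena V) (w : V → V → Option ℤ) : Prop :=
  ∀ u v, A.E u v → ∀ k : ℤ, w u v = some k → k ≤ 0

/-- The recharge energy level of the prefix `ρ 0 ⋯ ρ n`: the capacity plus the
accumulated weight since the last `R`-edge. -/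
def ELcap {V : Type} (w : V → V → Option ℤ) (cap : ℕ) (ρ : ℕ → V) : ℕ → ℤ
  | 0 => (cap : ℤ)
  | n + 1 =>
    match w (ρ n) (ρ (n + 1)) with
    | none => (cap : ℤ)
    | some k => ELcap w cap ρ n + k

/-- The recharge objective. -/
def Recharge {V : Type} (w : V → V → Option ℤ) (cap : ℕ) : Set (ℕ → V) :=
  {ρ | ∀ n, 0 ≤ ELcap w cap ρ n}

/-- The average of the recharge energy levels of the first `n` prefixes. -/
noncomputable def avgELcap {V : Type} (w : V → V → Option ℤ) (cap : ℕ) (ρ : ℕ → V)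
    (n : ℕ) : ℝ :=
  (∑ i ∈ Finset.range n, (ELcap w cap ρ i : ℝ)) / (n : ℝ)

/-- The average-bounded recharge objective. -/
def AvgRecharge {V : Type} (w : V → V → Option ℤ) (cap : ℕ) (t : ℝ) : Set (ℕ → V) :=
  {ρ | Filter.limsup (fun n => (avgELcap w cap ρ n : EReal)) Filter.atTop ≤ (t : EReal)} ∩
    Recharge w cap

/-- The (max-)parity objective: the maximal color occurring infinitely often is even. -/
def ParityObj {V : Type} (Ω : V → ℕ) : Set (ℕ → V) :=
  {ρ | ∃ c, Even c ∧ {n | Ω (ρ n) = c}.Infinite ∧ ∀ d, {n | Ω (ρ n) = d}.Infinite → d ≤ c}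

section StatementZero

open Classical Filter

variable {V : Type} [Fintype V]

/-- Bound on absolute values of weights. -/
noncomputable def Wbd (w : V → V → ℤ) : ℕ :=
  1 + Finset.univ.sup (fun p : V × V => (w p.1 p.2).natAbs)

lemma Wbd_pos (w : V → V → ℤ) : 1 ≤ Wbd w := Nat.le_add_right 1 _

lemma abs_w_le (w : V → V → ℤ) (u v : V) : (w u v).natAbs ≤ Wbd w := by
  have := Finset.le_sup (f := fun p : V × V => (w p.1 p.2).natAbs)
    (Finset.mem_univ (u, v))
  have h2 : (w u v).natAbs ≤ Finset.univ.sup (fun p : V × V => (w p.1 p.2).natAbs) := by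
    simpa using this
  simp only [Wbd]; omega

lemma w_ge (w : V → V → ℤ) (u v : V) : -(Wbd w : ℤ) ≤ w u v := by
  have h := abs_w_le w u v
  have : |w u v| ≤ (Wbd w : ℤ) := by
    rw [Int.abs_eq_natAbs]; exact_mod_cast h
  linarith [neg_abs_le (w u v)]

/-- The safety operator for the bounded-energy game. -/
def SafeF (A : Arena V) (w : V → V → ℤ) (cap : ℤ) : Set (V × ℤ) →o Set (V × ℤ) where
  toFun S := {p | 0 ≤ p.2 ∧ p.2 ≤ cap ∧
    (p.1 ∈ A.V0 → ∃ v', A.E p.1 v' ∧ (v', p.2 + w p.1 v') ∈ S) ∧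
    (p.1 ∉ A.V0 → ∀ v', A.E p.1 v' → (v', p.2 + w p.1 v') ∈ S)}
  monotone' := by
    intro S T hST p hp
    refine ⟨hp.1, hp.2.1, fun h0 => ?_, fun h1 v' hE => hST (hp.2.2.2 h1 v' hE)⟩
    obtain ⟨v', hE, hS⟩ := hp.2.2.1 h0
    exact ⟨v', hE, hST hS⟩

/-- Configurations from which Player 0 can keep the energy in `[0, cap]`. -/
def Safe (A : Arena V) (w : V → V → ℤ) (cap : ℤ) : Set (V × ℤ) :=
  OrderHom.gfp (SafeF A w cap)

lemma Safe_fixed (A : Arena V) (w : V → V → ℤ) (cap : ℤ) :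
    SafeF A w cap (Safe A w cap) = Safe A w cap :=
  OrderHom.isFixedPt_gfp (SafeF A w cap)

lemma Safe_coind (A : Arena V) (w : V → V → ℤ) (cap : ℤ) {S : Set (V × ℤ)}
    (h : S ⊆ SafeF A w cap S) : S ⊆ Safe A w cap :=
  OrderHom.le_gfp _ h

lemma Safe_mono (A : Arena V) (w : V → V → ℤ) {cap cap' : ℤ} (h : cap ≤ cap') :
    Safe A w cap ⊆ Safe A w cap' := by
  apply Safe_coind
  intro p hp
  have hp' : p ∈ SafeF A w cap (Safe A w cap) := by rw [Safe_fixed]; exact hp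
  exact ⟨hp'.1, le_trans hp'.2.1 h, hp'.2.2⟩

lemma Safe_bounds (A : Arena V) (w : V → V → ℤ) (cap : ℤ) {p : V × ℤ}
    (hp : p ∈ Safe A w cap) : 0 ≤ p.2 ∧ p.2 ≤ cap := by
  rw [← Safe_fixed] at hp; exact ⟨hp.1, hp.2.1⟩

/-- Configurations from which Player 0 can keep the energy bounded (for some cap). -/
def Pw (A : Arena V) (w : V → V → ℤ) : Set (V × ℤ) := ⋃ cap : ℤ, Safe A w cap

/-- Configurations with nonnegative energy from which Player 0 cannot keep
the energy bounded. -/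
def Qw (A : Arena V) (w : V → V → ℤ) : Set (V × ℤ) := {p | 0 ≤ p.2 ∧ p ∉ Pw A w}

end StatementZero
section StatementZero2

open Classical Filter

variable {V : Type} [Fintype V]

lemma Qw_nonneg {A : Arena V} {w : V → V → ℤ} {p : V × ℤ} (hp : p ∈ Qw A w) : 0 ≤ p.2 := hp.1

lemma mem_Pw_of_Safe {A : Arena V} {w : V → V → ℤ} {cap : ℤ} {p : V × ℤ}
    (h : p ∈ Safe A w cap) : p ∈ Pw A w := Set.mem_iUnion.2 ⟨cap, h⟩

/-- If a configuration is in `Pw`, pick a capacity witnessing it. -/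
noncomputable def capOf (A : Arena V) (w : V → V → ℤ) (p : V × ℤ) : ℤ :=
  if h : p ∈ Pw A w then (Set.mem_iUnion.1 h).choose else 0

lemma capOf_spec {A : Arena V} {w : V → V → ℤ} {p : V × ℤ} (h : p ∈ Pw A w) :
    p ∈ Safe A w (capOf A w p) := by
  rw [capOf, dif_pos h]
  exact (Set.mem_iUnion.1 h).choose_spec

/-- Closure of `Qw` under Player 0 moves. -/
lemma Qw_closed_V0 {A : Arena V} {w : V → V → ℤ} {p : V × ℤ} (hp : p ∈ Qw A w)
    (h0 : p.1 ∈ A.V0) {v' : V} (hE : A.E p.1 v') :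
    p.2 + w p.1 v' < 0 ∨ (v', p.2 + w p.1 v') ∈ Qw A w := by
  by_contra hcon
  push_neg at hcon
  obtain ⟨hge, hnQ⟩ := hcon
  have hP : (v', p.2 + w p.1 v') ∈ Pw A w := by
    by_contra hnP
    exact hnQ ⟨hge, hnP⟩
  obtain ⟨c', hc'⟩ := Set.mem_iUnion.1 hP
  -- p is safe for cap max c' p.2
  have hpSafe : p ∈ Safe A w (max c' p.2) := by
    have : insert p (Safe A w (max c' p.2)) ⊆
        SafeF A w (max c' p.2) (insert p (Safe A w (max c' p.2))) := by
      intro q hq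
      rcases Set.mem_insert_iff.1 hq with rfl | hq
      · refine ⟨hp.1, le_max_right _ _, fun _ => ?_, fun h1 => absurd h0 h1⟩
        exact ⟨v', hE, Set.mem_insert_of_mem _ (Safe_mono A w (le_max_left _ _) hc')⟩
      · have hq' : q ∈ SafeF A w (max c' p.2) (Safe A w (max c' p.2)) := by
          rw [Safe_fixed]; exact hq
        refine ⟨hq'.1, hq'.2.1, fun hh => ?_, fun hh v'' hE'' => ?_⟩
        · obtain ⟨v'', hE'', hS⟩ := hq'.2.2.1 hh
          exact ⟨v'', hE'', Set.mem_insert_of_mem _ hS⟩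
        · exact Set.mem_insert_of_mem _ (hq'.2.2.2 hh v'' hE'')
    exact Safe_coind A w _ this (Set.mem_insert _ _)
  exact hp.2 (mem_Pw_of_Safe hpSafe)

/-- Closure of `Qw` under Player 1 moves: some successor stays bad. -/
lemma Qw_closed_V1 {A : Arena V} {w : V → V → ℤ} {p : V × ℤ} (hp : p ∈ Qw A w)
    (h1 : p.1 ∉ A.V0) :
    ∃ v', A.E p.1 v' ∧ (p.2 + w p.1 v' < 0 ∨ (v', p.2 + w p.1 v') ∈ Qw A w) := by
  by_contra hcon
  push_neg at hcon
  -- every successor has nonnegative energy and is in Pw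
  have hall : ∀ v', A.E p.1 v' → (v', p.2 + w p.1 v') ∈ Pw A w := by
    intro v' hE
    have := hcon v' hE
    by_contra hnP
    exact this.2 ⟨this.1, hnP⟩
  set cbig : ℤ := max p.2 ((Finset.univ.sup (fun v' : V => (capOf A w (v', p.2 + w p.1 v')).toNat) : ℕ) : ℤ) with hcbig
  have hsucc : ∀ v', A.E p.1 v' → (v', p.2 + w p.1 v') ∈ Safe A w cbig := by
    intro v' hE
    refine Safe_mono A w ?_ (capOf_spec (hall v' hE))
    have h1 : capOf A w (v', p.2 + w p.1 v') ≤
        ((capOf A w (v', p.2 + w p.1 v')).toNat : ℤ) := Int.self_le_toNat _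
    have h2 : (capOf A w (v', p.2 + w p.1 v')).toNat ≤
        Finset.univ.sup (fun v' : V => (capOf A w (v', p.2 + w p.1 v')).toNat) := by
      simpa using Finset.le_sup (f := fun v' : V => (capOf A w (v', p.2 + w p.1 v')).toNat)
        (Finset.mem_univ v')
    calc capOf A w (v', p.2 + w p.1 v') ≤ _ := h1
      _ ≤ _ := by exact_mod_cast h2
      _ ≤ cbig := le_max_right _ _
  have hpSafe : p ∈ Safe A w cbig := by
    have : insert p (Safe A w cbig) ⊆ SafeF A w cbig (insert p (Safe A w cbig)) := by
      intro q hq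
      rcases Set.mem_insert_iff.1 hq with rfl | hq
      · exact ⟨hp.1, le_max_left _ _, fun hh => absurd hh h1,
          fun _ v'' hE'' => Set.mem_insert_of_mem _ (hsucc v'' hE'')⟩
      · have hq' : q ∈ SafeF A w cbig (Safe A w cbig) := by rw [Safe_fixed]; exact hq
        refine ⟨hq'.1, hq'.2.1, fun hh => ?_, fun hh v'' hE'' => ?_⟩
        · obtain ⟨v'', hE'', hS⟩ := hq'.2.2.1 hh
          exact ⟨v'', hE'', Set.mem_insert_of_mem _ hS⟩
        · exact Set.mem_insert_of_mem _ (hq'.2.2.2 hh v'' hE'')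
    exact Safe_coind A w _ this (Set.mem_insert _ _)
  exact hp.2 (mem_Pw_of_Safe hpSafe)

end StatementZero2
section StatementZero3

open Classical Filter

variable {V : Type} [Fintype V]

/-- One step of Player 1's attractor towards leaving `[0, c]`. -/
def BF (A : Arena V) (w : V → V → ℤ) (c : ℤ) (S : Set (V × ℤ)) : Set (V × ℤ) :=
  S ∪ {p | p ∈ Qw A w ∧ p.2 ≤ c ∧
    ((p.1 ∈ A.V0 ∧ ∀ v', A.E p.1 v' → (v', p.2 + w p.1 v') ∈ S) ∨
     (p.1 ∉ A.V0 ∧ ∃ v', A.E p.1 v' ∧ (v', p.2 + w p.1 v') ∈ S))}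

/-- Player 1's attractor levels. -/
def Bset (A : Arena V) (w : V → V → ℤ) (c : ℤ) : ℕ → Set (V × ℤ)
  | 0 => {p | p.2 < 0 ∨ (c < p.2 ∧ p ∈ Qw A w)}
  | n + 1 => BF A w c (Bset A w c n)

lemma Bset_le_succ (A : Arena V) (w : V → V → ℤ) (c : ℤ) (n : ℕ) :
    Bset A w c n ⊆ Bset A w c (n + 1) := by
  intro p hp; exact Or.inl hp

lemma Bset_mono (A : Arena V) (w : V → V → ℤ) (c : ℤ) {n m : ℕ} (h : n ≤ m) :
    Bset A w c n ⊆ Bset A w c m := by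
  induction m with
  | zero => simpa [Nat.le_zero.1 h]
  | succ m ih =>
    rcases Nat.le_succ_iff.1 h with h' | h'
    · exact (ih h').trans (Bset_le_succ A w c m)
    · simp [h']

lemma Bset_sub_Q (A : Arena V) (w : V → V → ℤ) (c : ℤ) (n : ℕ) {p : V × ℤ}
    (hp : p ∈ Bset A w c n) (h0 : p ∉ Bset A w c 0) : p ∈ Qw A w := by
  induction n with
  | zero => exact absurd hp h0
  | succ n ih =>
    rcases hp with hp | hp
    · exact ih hp
    · exact hp.1

lemma Bset_stab (A : Arena V) (w : V → V → ℤ) (c : ℤ) {n : ℕ}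
    (h : Bset A w c n = Bset A w c (n + 1)) :
    ∀ m, n ≤ m → Bset A w c m = Bset A w c n := by
  intro m hm
  induction m with
  | zero => simp [Nat.le_zero.1 hm]
  | succ m ih =>
    rcases Nat.le_succ_iff.1 hm with h' | h'
    · have heq := ih h'
      show BF A w c (Bset A w c m) = _
      rw [heq]
      exact h.symm
    · simp [h']

/-- The finite region of relevant configurations. -/
noncomputable def Breg (c : ℤ) : Finset (V × ℤ) := Finset.univ ×ˢ Finset.Icc 0 c

lemma Bset_new_in_reg (A : Arena V) (w : V → V → ℤ) (c : ℤ) (n : ℕ) :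
    Bset A w c (n + 1) ⊆ Bset A w c n ∪ ↑(Breg (V := V) c) := by
  intro p hp
  rcases hp with hp | hp
  · exact Or.inl hp
  · refine Or.inr ?_
    simp only [Breg, Finset.coe_product, Set.mem_prod, Finset.mem_coe, Finset.mem_Icc]
    exact ⟨by simp, hp.1.1, hp.2.1⟩

/-- The attractor stabilizes within `(Breg c).card` steps. -/
lemma Bset_stable_at_card (A : Arena V) (w : V → V → ℤ) (c : ℤ) :
    ∀ m, (Breg (V := V) c).card ≤ m →
      Bset A w c m = Bset A w c ((Breg (V := V) c).card) := by
  set K := (Breg (V := V) c).card with hK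
  set D : ℕ → Finset (V × ℤ) := fun n => (Breg (V := V) c).filter (· ∈ Bset A w c n) with hD
  have hDmono : ∀ n, D n ⊆ D (n + 1) := by
    intro n q hq
    rw [hD, Finset.mem_filter] at hq ⊢
    exact ⟨hq.1, Bset_le_succ A w c n hq.2⟩
  have hBeq : ∀ n, D n = D (n + 1) → Bset A w c n = Bset A w c (n + 1) := by
    intro n hDn
    apply Set.Subset.antisymm (Bset_le_succ A w c n)
    intro p hp
    rcases Bset_new_in_reg A w c n hp with h | h
    · exact h
    · have : p ∈ D (n + 1) := Finset.mem_filter.2 ⟨h, hp⟩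
      rw [← hDn] at this
      exact (Finset.mem_filter.1 this).2
  have hcard : ∀ n, (∀ m < n, D m ≠ D (m + 1)) → n ≤ (D n).card := by
    intro n
    induction n with
    | zero => simp
    | succ n ih =>
      intro hall
      have h1 : n ≤ (D n).card := ih (fun m hm => hall m (Nat.lt_succ_of_lt hm))
      have h2 : D n ⊂ D (n + 1) :=
        Finset.ssubset_iff_subset_ne.2 ⟨hDmono n, hall n (Nat.lt_succ_self n)⟩
      have := Finset.card_lt_card h2
      omega
  have hstab : ∃ n ≤ K, D n = D (n + 1) := by
    by_contra hcon
    push_neg at hcon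
    have h1 := hcard (K + 1) (fun m hm => hcon m (by omega))
    have h2 : (D (K + 1)).card ≤ K := by
      rw [hK]; exact Finset.card_le_card (Finset.filter_subset _ _)
    omega
  obtain ⟨n, hn, hDn⟩ := hstab
  have hB := Bset_stab A w c (hBeq n hDn)
  intro m hm
  rw [hB m (le_trans hn hm), hB K hn]
section StatementZero4

open Classical Filter

variable {V : Type} [Fintype V]

lemma w_le (w : V → V → ℤ) (u v : V) : w u v ≤ (Wbd w : ℤ) := by
  have h := abs_w_le w u v
  have : |w u v| ≤ (Wbd w : ℤ) := by
    rw [Int.abs_eq_natAbs]; exact_mod_cast h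
  linarith [le_abs_self (w u v)]

/-- Every bad configuration in the region is in the attractor: Player 1 can
force the energy out of `[0, c]` within `(Breg c).card` steps. -/
lemma Bset_cover (A : Arena V) (w : V → V → ℤ) {c : ℤ} {p : V × ℤ}
    (hp : p ∈ Qw A w) (hpc : p.2 ≤ c) :
    p ∈ Bset A w c ((Breg (V := V) c).card) := by
  set K := (Breg (V := V) c).card with hK
  by_contra hpnB
  set G : Set (V × ℤ) := {q | q ∈ Qw A w ∧ q.2 ≤ c ∧ q ∉ Bset A w c K} with hG
  set region' : Finset (V × ℤ) := Finset.univ ×ˢ Finset.Icc 0 (c + (Wbd w : ℤ)) with hreg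
  set capstar : ℤ := max (c + (Wbd w : ℤ))
    ((region'.sup (fun q => (capOf A w q).toNat) : ℕ) : ℤ) with hcap
  have hcle : c ≤ capstar := le_trans (by have := Wbd_pos w; omega) (le_max_left _ _)
  have hBstab : Bset A w c (K + 1) = Bset A w c K :=
    Bset_stable_at_card A w c (K + 1) (Nat.le_succ K)
  have hS : G ∪ Safe A w capstar ⊆ SafeF A w capstar (G ∪ Safe A w capstar) := by
    intro q hq
    rcases hq with hq | hq
    · obtain ⟨hqQ, hqc, hqnB⟩ := hq
      have hq0 : 0 ≤ q.2 := hqQ.1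
      have hqnB' : q ∉ Bset A w c (K + 1) := by rw [hBstab]; exact hqnB
      by_cases hq1 : q.1 ∈ A.V0
      · -- Player 0 vertex: some successor avoids the attractor
        have hex : ∃ v', A.E q.1 v' ∧ (v', q.2 + w q.1 v') ∉ Bset A w c K := by
          by_contra hcon
          push_neg at hcon
          exact hqnB' (Or.inr ⟨hqQ, hqc, Or.inl ⟨hq1, hcon⟩⟩)
        obtain ⟨v', hE, hnB⟩ := hex
        refine ⟨hq0, le_trans hqc hcle, fun _ => ⟨v', hE, ?_⟩, fun hh => absurd hq1 hh⟩
        have hQ' : (v', q.2 + w q.1 v') ∈ Qw A w := by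
          rcases Qw_closed_V0 hqQ hq1 hE with hneg | hQ'
          · exact absurd (Bset_mono A w c (Nat.zero_le K) (Or.inl hneg)) hnB
          · exact hQ'
        have hle : q.2 + w q.1 v' ≤ c := by
          by_contra hgt
          push_neg at hgt
          exact hnB (Bset_mono A w c (Nat.zero_le K) (Or.inr ⟨hgt, hQ'⟩))
        exact Or.inl ⟨hQ', hle, hnB⟩
      · -- Player 1 vertex: all successors avoid the attractor
        have hall : ∀ v', A.E q.1 v' → (v', q.2 + w q.1 v') ∉ Bset A w c K := by
          intro v' hE hB
          exact hqnB' (Or.inr ⟨hqQ, hqc, Or.inr ⟨hq1, v', hE, hB⟩⟩)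
        refine ⟨hq0, le_trans hqc hcle, fun hh => absurd hh hq1, fun _ v' hE => ?_⟩
        have hnB := hall v' hE
        have h0' : 0 ≤ q.2 + w q.1 v' := by
          by_contra hneg
          push_neg at hneg
          exact hnB (Bset_mono A w c (Nat.zero_le K) (Or.inl hneg))
        have hub : q.2 + w q.1 v' ≤ c + (Wbd w : ℤ) := by
          have := w_le w q.1 v'
          omega
        by_cases hQ' : (v', q.2 + w q.1 v') ∈ Qw A w
        · have hle : q.2 + w q.1 v' ≤ c := by
            by_contra hgt
            push_neg at hgt
            exact hnB (Bset_mono A w c (Nat.zero_le K) (Or.inr ⟨hgt, hQ'⟩))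
          exact Or.inl ⟨hQ', hle, hnB⟩
        · have hP : (v', q.2 + w q.1 v') ∈ Pw A w := by
            by_contra hnP
            exact hQ' ⟨h0', hnP⟩
          refine Or.inr (Safe_mono A w ?_ (capOf_spec hP))
          have hmem : (v', q.2 + w q.1 v') ∈ region' := by
            rw [hreg]
            simp only [Finset.mem_product, Finset.mem_univ, Finset.mem_Icc, true_and]
            exact ⟨h0', hub⟩
          have h1 : capOf A w (v', q.2 + w q.1 v') ≤
              ((capOf A w (v', q.2 + w q.1 v')).toNat : ℤ) := Int.self_le_toNat _
          have h2 : (capOf A w (v', q.2 + w q.1 v')).toNat ≤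
              region'.sup (fun q => (capOf A w q).toNat) := by
            simpa using Finset.le_sup (f := fun q : V × ℤ => (capOf A w q).toNat) hmem
          calc capOf A w (v', q.2 + w q.1 v') ≤ _ := h1
            _ ≤ ((region'.sup (fun q => (capOf A w q).toNat) : ℕ) : ℤ) := by exact_mod_cast h2
            _ ≤ capstar := le_max_right _ _
    · have hq' : q ∈ SafeF A w capstar (Safe A w capstar) := by
        rw [Safe_fixed]; exact hq
      refine ⟨hq'.1, hq'.2.1, fun hh => ?_, fun hh v'' hE'' => Or.inr (hq'.2.2.2 hh v'' hE'')⟩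
      obtain ⟨v'', hE'', hS⟩ := hq'.2.2.1 hh
      exact ⟨v'', hE'', Or.inr hS⟩
  have hpSafe : p ∈ Safe A w capstar :=
    Safe_coind A w _ hS (Or.inl ⟨hp, hpc, hpnB⟩)
  exact hp.2 (mem_Pw_of_Safe hpSafe)

end StatementZero4
section StatementZero5

open Classical Filter

variable {V : Type} [Fintype V]

lemma prefixList_zero (ρ : ℕ → V) : prefixList ρ 0 = [ρ 0] := rfl

lemma prefixList_succ (ρ : ℕ → V) (n : ℕ) :
    prefixList ρ (n + 1) = prefixList ρ n ++ [ρ (n + 1)] := by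
  simp [prefixList, List.range_succ]

lemma prefixList_concat (ρ : ℕ → V) (n : ℕ) :
    ∃ h, prefixList ρ n = h ++ [ρ n] := by
  cases n with
  | zero => exact ⟨[], rfl⟩
  | succ n => exact ⟨prefixList ρ n, prefixList_succ ρ n⟩

lemma prefixList_congr {ρ ρ' : ℕ → V} {n : ℕ} (h : ∀ i ≤ n, ρ i = ρ' i) :
    prefixList ρ n = prefixList ρ' n := by
  simp only [prefixList]
  apply List.map_congr_left
  intro i hi
  exact h i (by simpa [Nat.lt_succ_iff] using List.mem_range.1 hi)

lemma EL_zero (w : V → V → ℤ) (ρ : ℕ → V) : EL w ρ 0 = 0 := by simp [EL]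

lemma EL_succ (w : V → V → ℤ) (ρ : ℕ → V) (n : ℕ) :
    EL w ρ (n + 1) = EL w ρ n + w (ρ n) (ρ (n + 1)) := by
  simp [EL, Finset.sum_range_succ]

lemma EL_congr {w : V → V → ℤ} {ρ ρ' : ℕ → V} {n : ℕ} (h : ∀ i ≤ n, ρ i = ρ' i)
    {m : ℕ} (hm : m ≤ n) : EL w ρ m = EL w ρ' m := by
  apply Finset.sum_congr rfl
  intro i hi
  have hi' := Finset.mem_range.1 hi
  rw [h i (by omega), h (i + 1) (by omega)]

lemma ELl_cons_ne (w : V → V → ℤ) (a : V) (l : List V) (h : l ≠ []) :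
    ELl w (a :: l) = w a (l.head h) + ELl w l := by
  cases l with
  | nil => exact absurd rfl h
  | cons b l => rfl

lemma prefixList_cons (ρ : ℕ → V) (n : ℕ) :
    prefixList ρ (n + 1) = ρ 0 :: prefixList (fun i => ρ (i + 1)) n := by
  simp only [prefixList, List.range_succ_eq_map, List.map_cons, List.map_map]
  rfl

lemma prefixList_ne_nil (ρ : ℕ → V) (n : ℕ) : prefixList ρ n ≠ [] := by
  simp [prefixList]

lemma prefixList_head (ρ : ℕ → V) (n : ℕ) (h : prefixList ρ n ≠ []) :
    (prefixList ρ n).head h = ρ 0 := by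
  cases n with
  | zero => rfl
  | succ n =>
    have := prefixList_cons ρ n
    simp only [this, List.head_cons]

lemma ELl_prefixList (w : V → V → ℤ) : ∀ (n : ℕ) (ρ : ℕ → V),
    ELl w (prefixList ρ n) = EL w ρ n := by
  intro n
  induction n with
  | zero => intro ρ; simp [prefixList_zero, ELl, EL_zero]
  | succ n ih =>
    intro ρ
    rw [prefixList_cons ρ n]
    rw [ELl_cons_ne w _ _ (prefixList_ne_nil _ n)]
    rw [prefixList_head _ n (prefixList_ne_nil _ n), ih]
    have hs := Finset.sum_range_succ' (fun i => w (ρ i) (ρ (i + 1))) n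
    simp only [EL] at hs ⊢
    rw [hs]
    ring

/-- The last vertex of a history. -/
def lastOf (A : Arena V) (l : List V) : V := l.getLast?.getD A.vI

lemma lastOf_concat (A : Arena V) (h : List V) (v : V) : lastOf A (h ++ [v]) = v := by
  simp [lastOf]

lemma lastOf_prefixList (A : Arena V) (ρ : ℕ → V) (n : ℕ) :
    lastOf A (prefixList ρ n) = ρ n := by
  obtain ⟨h, hh⟩ := prefixList_concat ρ n
  rw [hh, lastOf_concat]

end StatementZero5
section StatementZero6

open Classical Filter

variable {V : Type} [Fintype V]

/-- The strategy extracted from the safety fixpoint. -/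
noncomputable def safeStrat (A : Arena V) (w : V → V → ℤ) (cap : ℤ) : List V → V :=
  fun l =>
    if h : ∃ v', A.E (lastOf A l) v' ∧
        (v', ELl w l + w (lastOf A l) v') ∈ Safe A w cap then
      h.choose
    else
      (A.succ (lastOf A l)).choose

lemma safeStrat_edge (A : Arena V) (w : V → V → ℤ) (cap : ℤ) (l : List V) :
    A.E (lastOf A l) (safeStrat A w cap l) := by
  rw [safeStrat]
  by_cases hc : ∃ v', A.E (lastOf A l) v' ∧
      (v', ELl w l + w (lastOf A l) v') ∈ Safe A w cap
  · rw [dif_pos hc]; exact hc.choose_spec.1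
  · rw [dif_neg hc]; exact (A.succ (lastOf A l)).choose_spec

lemma safeStrat_safe (A : Arena V) (w : V → V → ℤ) (cap : ℤ) (l : List V)
    (hc : ∃ v', A.E (lastOf A l) v' ∧
      (v', ELl w l + w (lastOf A l) v') ∈ Safe A w cap) :
    (safeStrat A w cap l, ELl w l + w (lastOf A l) (safeStrat A w cap l)) ∈ Safe A w cap := by
  rw [safeStrat, dif_pos hc]
  exact hc.choose_spec.2

lemma safeStrat_isStrategy (A : Arena V) (w : V → V → ℤ) (cap : ℤ) :
    A.IsStrategy A.V0 (safeStrat A w cap) := by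
  intro h v _
  have := safeStrat_edge A w cap (h ++ [v])
  rwa [lastOf_concat] at this

/-- If the initial configuration is safe, Player 0 wins the bounded-energy game. -/
lemma Safe_win (A : Arena V) (w : V → V → ℤ) (cap : ℤ)
    (h : ((A.vI, (0 : ℤ)) : V × ℤ) ∈ Safe A w cap) :
    A.Player0Wins (EnergyLU w cap.toNat) := by
  refine ⟨safeStrat A w cap, safeStrat_isStrategy A w cap, ?_⟩
  intro ρ hplay hcons
  have hinv : ∀ n, (ρ n, EL w ρ n) ∈ Safe A w cap := by
    intro n
    induction n with
    | zero => rw [hplay.1, EL_zero]; exact h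
    | succ n ih =>
      have hfix : (ρ n, EL w ρ n) ∈ SafeF A w cap (Safe A w cap) := by
        rw [Safe_fixed]; exact ih
      by_cases h0 : ρ n ∈ A.V0
      · have hstep := hcons n h0
        have hc : ∃ v', A.E (lastOf A (prefixList ρ n)) v' ∧
            (v', ELl w (prefixList ρ n) + w (lastOf A (prefixList ρ n)) v') ∈ Safe A w cap := by
          rw [lastOf_prefixList, ELl_prefixList]
          exact hfix.2.2.1 h0
        have hS := safeStrat_safe A w cap (prefixList ρ n) hc
        rw [lastOf_prefixList, ELl_prefixList] at hS
        rw [EL_succ, hstep]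
        exact hS
      · rw [EL_succ]
        exact hfix.2.2.2 h0 (ρ (n + 1)) (hplay.2 n)
  intro n
  have := Safe_bounds A w cap (hinv n)
  exact ⟨this.1, le_trans this.2 (Int.self_le_toNat cap)⟩

/-- Easy direction: a winning strategy for `EnergyLU` wins `AvgEnergyL`. -/
lemma easy_dir (A : Arena V) (w : V → V → ℤ) (cap : ℕ)
    (h : A.Player0Wins (EnergyLU w cap)) :
    A.Player0Wins (AvgEnergyL w (cap : ℝ)) := by
  obtain ⟨σ, hσ, hwin⟩ := h
  refine ⟨σ, hσ, ?_⟩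
  intro ρ hplay hcons
  have hLU := hwin ρ hplay hcons
  constructor
  · exact fun n => (hLU n).1
  · have havg : ∀ n, avgEL w ρ n ≤ (cap : ℝ) := by
      intro n
      rcases Nat.eq_zero_or_pos n with rfl | hn
      · simp [avgEL]
      · rw [avgEL, div_le_iff₀ (by exact_mod_cast hn)]
        calc ∑ i ∈ Finset.range n, (EL w ρ i : ℝ)
            ≤ ∑ _i ∈ Finset.range n, (cap : ℝ) := by
              apply Finset.sum_le_sum
              intro i _
              exact_mod_cast (hLU i).2
          _ = (cap : ℝ) * n := by simp [mul_comm]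
    show Filter.limsup (fun n => ((avgEL w ρ n : ℝ) : EReal)) Filter.atTop ≤ ((cap : ℝ) : EReal)
    exact Filter.limsup_le_of_le (by isBoundedDefault)
      (Filter.Eventually.of_forall fun n => EReal.coe_le_coe_iff.2 (havg n))

end StatementZero6
section StatementZero7

open Classical Filter

variable {V : Type} [Fintype V]

/-- A finite play prefix `ρ 0 ⋯ ρ m` consistent with `σ`. -/
def GoodUpTo (A : Arena V) (σ : List V → V) (ρ : ℕ → V) (m : ℕ) : Prop :=
  ρ 0 = A.vI ∧ ∀ i < m, A.E (ρ i) (ρ (i + 1)) ∧ (ρ i ∈ A.V0 → ρ (i + 1) = σ (prefixList ρ i))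

/-- One-step extension of a prefix. -/
def stepTo (ρ : ℕ → V) (m : ℕ) (x : V) : ℕ → V := fun i => if i ≤ m then ρ i else x

lemma stepTo_agree (ρ : ℕ → V) (m : ℕ) (x : V) : ∀ i ≤ m, stepTo ρ m x i = ρ i :=
  fun i hi => if_pos hi

lemma stepTo_last (ρ : ℕ → V) (m : ℕ) (x : V) : stepTo ρ m x (m + 1) = x :=
  if_neg (by omega)

lemma strat_edge {A : Arena V} {σ : List V → V} (hσ : A.IsStrategy A.V0 σ)
    {ρ : ℕ → V} {m : ℕ} (hv : ρ m ∈ A.V0) : A.E (ρ m) (σ (prefixList ρ m)) := by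
  obtain ⟨h, hh⟩ := prefixList_concat ρ m
  rw [hh]
  exact hσ h (ρ m) hv

lemma GoodUpTo_stepTo {A : Arena V} {σ : List V → V} {ρ : ℕ → V} {m : ℕ}
    (hg : GoodUpTo A σ ρ m) {x : V} (hE : A.E (ρ m) x)
    (hx : ρ m ∈ A.V0 → x = σ (prefixList ρ m)) :
    GoodUpTo A σ (stepTo ρ m x) (m + 1) := by
  constructor
  · rw [stepTo_agree ρ m x 0 (Nat.zero_le m)]; exact hg.1
  · intro i hi
    rcases Nat.lt_succ_iff_lt_or_eq.1 hi with hi' | heq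
    · have h1 : stepTo ρ m x i = ρ i := stepTo_agree ρ m x i (by omega)
      have h2 : stepTo ρ m x (i + 1) = ρ (i + 1) := stepTo_agree ρ m x (i + 1) (by omega)
      have h3 : prefixList (stepTo ρ m x) i = prefixList ρ i :=
        prefixList_congr (fun j hj => stepTo_agree ρ m x j (by omega))
      rw [h1, h2, h3]
      exact hg.2 i hi'
    · subst heq
      have h1 : stepTo ρ i x i = ρ i := stepTo_agree ρ i x i le_rfl
      have h2 : stepTo ρ i x (i + 1) = x := stepTo_last ρ i x
      have h3 : prefixList (stepTo ρ i x) i = prefixList ρ i :=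
        prefixList_congr (fun j hj => stepTo_agree ρ i x j hj)
      rw [h1, h2, h3]
      exact ⟨hE, hx⟩

/-- Descent along Player 1's attractor: the play can be extended (consistently
with `σ`) to leave `[0, c]` within `k` steps. -/
lemma descend {A : Arena V} {w : V → V → ℤ} {σ : List V → V} (hσ : A.IsStrategy A.V0 σ)
    (c : ℤ) : ∀ (k : ℕ) (ρ : ℕ → V) (m : ℕ), GoodUpTo A σ ρ m →
    (ρ m, EL w ρ m) ∈ Bset A w c k →
    ∃ ρ' m', GoodUpTo A σ ρ' m' ∧ m ≤ m' ∧ m' ≤ m + k ∧ (∀ i ≤ m, ρ' i = ρ i) ∧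
      (ρ' m', EL w ρ' m') ∈ Bset A w c 0 ∧ (∀ i, m ≤ i → i < m' → 0 ≤ EL w ρ' i) := by
  intro k
  induction k with
  | zero =>
    intro ρ m hg hB
    refine ⟨ρ, m, hg, le_rfl, ?_, fun i _ => rfl, hB, ?_⟩
    · omega
    · intro i h1 h2; omega
  | succ k ih =>
    intro ρ m hg hB
    by_cases h0 : (ρ m, EL w ρ m) ∈ Bset A w c 0
    · refine ⟨ρ, m, hg, le_rfl, ?_, fun i _ => rfl, h0, ?_⟩
      · omega
      · intro i h1 h2; omega
    rcases hB with hB | ⟨hQ, hle, hor⟩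
    · obtain ⟨ρ', m', a, b, c', d, e, f⟩ := ih ρ m hg hB
      exact ⟨ρ', m', a, b, by omega, d, e, f⟩
    · have hQ0 : (0 : ℤ) ≤ EL w ρ m := hQ.1
      have key : ∃ x, A.E (ρ m) x ∧ (ρ m ∈ A.V0 → x = σ (prefixList ρ m)) ∧
          (x, EL w ρ m + w (ρ m) x) ∈ Bset A w c k := by
        rcases hor with ⟨hv0, hall⟩ | ⟨hv1, x, hE, hx⟩
        · exact ⟨σ (prefixList ρ m), strat_edge hσ hv0, fun _ => rfl,
            hall _ (strat_edge hσ hv0)⟩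
        · exact ⟨x, hE, fun hv => absurd hv hv1, hx⟩
      obtain ⟨x, hE, hxσ, hxB⟩ := key
      have hg₁ : GoodUpTo A σ (stepTo ρ m x) (m + 1) := GoodUpTo_stepTo hg hE hxσ
      have hagree : ∀ i ≤ m, (stepTo ρ m x) i = ρ i := stepTo_agree ρ m x
      have hlast : (stepTo ρ m x) (m + 1) = x := stepTo_last ρ m x
      have hEL₁ : EL w (stepTo ρ m x) (m + 1) = EL w ρ m + w (ρ m) x := by
        rw [EL_succ, EL_congr (w := w) (n := m) hagree le_rfl, hagree m le_rfl, hlast]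
      have hB₁ : ((stepTo ρ m x) (m + 1), EL w (stepTo ρ m x) (m + 1)) ∈ Bset A w c k := by
        rw [hlast, hEL₁]; exact hxB
      obtain ⟨ρ', m', a, b, c', d, e, f⟩ := ih (stepTo ρ m x) (m + 1) hg₁ hB₁
      refine ⟨ρ', m', a, by omega, by omega, fun i hi => by rw [d i (by omega), hagree i hi],
        e, ?_⟩
      intro i h1 h2
      rcases Nat.eq_or_lt_of_le h1 with heq2 | h1'
      · have heq : EL w ρ' i = EL w ρ i := by
          exact EL_congr (w := w) (n := i)
            (fun j hj => by rw [d j (by omega), hagree j (by omega)]) le_rfl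
        rw [heq, ← heq2]; exact hQ0
      · exact f i (by omega) h2

/-- Draining: from a `Qw` configuration with high energy, the play can be
extended while staying in `Qw` and losing at most `Wbd` per step. -/
lemma drain {A : Arena V} {w : V → V → ℤ} {σ : List V → V} (hσ : A.IsStrategy A.V0 σ) :
    ∀ (L : ℕ) (ρ : ℕ → V) (m : ℕ), GoodUpTo A σ ρ m →
    (ρ m, EL w ρ m) ∈ Qw A w → (L : ℤ) * (Wbd w : ℤ) ≤ EL w ρ m →
    ∃ ρ', GoodUpTo A σ ρ' (m + L) ∧ (∀ i ≤ m, ρ' i = ρ i) ∧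
      (ρ' (m + L), EL w ρ' (m + L)) ∈ Qw A w ∧
      (∀ j ≤ L, EL w ρ m - (j : ℤ) * (Wbd w : ℤ) ≤ EL w ρ' (m + j)) := by
  intro L
  induction L with
  | zero =>
    intro ρ m hg hQ _
    refine ⟨ρ, hg, fun i _ => rfl, hQ, ?_⟩
    intro j hj
    have : j = 0 := Nat.le_zero.1 hj
    subst this
    simp
  | succ L ih =>
    intro ρ m hg hQ hbig
    have hW : (0 : ℤ) ≤ (Wbd w : ℤ) := by positivity
    obtain ⟨ρ₁, hg₁, hagree₁, hQ₁, hbd₁⟩ := ih ρ m hg hQ (by push_cast at hbig ⊢; nlinarith)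
    have he₁ : EL w ρ m - (L : ℤ) * (Wbd w : ℤ) ≤ EL w ρ₁ (m + L) := hbd₁ L le_rfl
    have key : ∃ x, A.E (ρ₁ (m + L)) x ∧ (ρ₁ (m + L) ∈ A.V0 → x = σ (prefixList ρ₁ (m + L))) ∧
        (x, EL w ρ₁ (m + L) + w (ρ₁ (m + L)) x) ∈ Qw A w := by
      by_cases h0 : ρ₁ (m + L) ∈ A.V0
      · have hE := strat_edge hσ h0
        rcases Qw_closed_V0 hQ₁ h0 hE with hneg | hQ'
        · exfalso
          have := w_ge w (ρ₁ (m + L)) (σ (prefixList ρ₁ (m + L)))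
          push_cast at hbig
          simp only at hneg
          nlinarith
        · exact ⟨σ (prefixList ρ₁ (m + L)), hE, fun _ => rfl, hQ'⟩
      · obtain ⟨x, hE, hor⟩ := Qw_closed_V1 hQ₁ h0
        rcases hor with hneg | hQ'
        · exfalso
          have := w_ge w (ρ₁ (m + L)) x
          push_cast at hbig
          simp only at hneg
          nlinarith
        · exact ⟨x, hE, fun hv => absurd hv h0, hQ'⟩
    obtain ⟨x, hE, hxσ, hxQ⟩ := key
    have hg' : GoodUpTo A σ (stepTo ρ₁ (m + L) x) (m + L + 1) := GoodUpTo_stepTo hg₁ hE hxσ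
    have hagree' : ∀ i ≤ m + L, (stepTo ρ₁ (m + L) x) i = ρ₁ i := stepTo_agree ρ₁ (m + L) x
    have hlast : (stepTo ρ₁ (m + L) x) (m + L + 1) = x := stepTo_last ρ₁ (m + L) x
    have hEL' : EL w (stepTo ρ₁ (m + L) x) (m + L + 1)
        = EL w ρ₁ (m + L) + w (ρ₁ (m + L)) x := by
      rw [EL_succ, EL_congr (w := w) (n := m + L) hagree' le_rfl, hagree' (m + L) le_rfl, hlast]
    refine ⟨stepTo ρ₁ (m + L) x, hg',
      fun i hi => by rw [hagree' i (by omega), hagree₁ i hi], ?_, ?_⟩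
    · show ((stepTo ρ₁ (m + L) x) (m + L + 1), EL w (stepTo ρ₁ (m + L) x) (m + L + 1)) ∈ Qw A w
      rw [hlast, hEL']
      exact hxQ
    · intro j hj
      rcases Nat.le_succ_iff.1 hj with hj' | rfl
      · have heq : EL w (stepTo ρ₁ (m + L) x) (m + j) = EL w ρ₁ (m + j) :=
          EL_congr (w := w) (n := m + L) hagree' (by omega)
        rw [heq]
        exact hbd₁ j hj'
      · show EL w ρ m - ((L + 1 : ℕ) : ℤ) * (Wbd w : ℤ)
            ≤ EL w (stepTo ρ₁ (m + L) x) (m + L + 1)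
        rw [hEL']
        have := w_ge w (ρ₁ (m + L)) x
        push_cast
        push_cast at he₁
        nlinarith
  done

end StatementZero7
section StatementZero8a

lemma phase_arith (Vc W T m e M L c1 : ℕ) (hW : 1 ≤ W) (hT : 1 ≤ T)
    (hM : M = m + e + Vc + 4) (hL : L = 4 * T * M ^ 2) (hc : c1 = 2 * L * W) :
    T * (m + Vc * (c1 + e + 1) + L) < L * (L * W + 1) := by
  have h1 : m ≤ M := by omega
  have h2 : Vc ≤ M := by omega
  have h4 : 4 ≤ M := by omega
  have hMM : M ≤ M ^ 2 := by
    calc M = M * 1 := (mul_one M).symm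
      _ ≤ M * M := Nat.mul_le_mul_left M (by omega)
      _ = M ^ 2 := (sq M).symm
  have hM2 : 16 ≤ M ^ 2 := by
    calc (16 : ℕ) = 4 * 4 := by norm_num
      _ ≤ M * M := Nat.mul_le_mul h4 h4
      _ = M ^ 2 := (sq M).symm
  have hc8 : 8 ≤ c1 := by
    rw [hc, hL]
    calc (8 : ℕ) = 2 * (4 * 1 * 1) * 1 := by norm_num
      _ ≤ 2 * (4 * T * M ^ 2) * W := by
          apply Nat.mul_le_mul _ hW
          apply Nat.mul_le_mul (le_refl 2)
          exact Nat.mul_le_mul (by omega) (by omega)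
  have hA : Vc * (c1 + e + 1) ≤ M * c1 + M * M :=
    calc Vc * (c1 + e + 1) ≤ M * (c1 + M) := Nat.mul_le_mul h2 (by omega)
      _ = M * c1 + M * M := by ring
  have hRHS : L * (L * W + 1) = 2 * (T * M ^ 2 * c1) + L := by
    rw [hc, hL]; ring
  have k1 : 4 * (T * M) ≤ T * M ^ 2 * c1 := by
    calc 4 * (T * M) = T * M * 4 := by ring
      _ ≤ T * M ^ 2 * c1 := Nat.mul_le_mul (Nat.mul_le_mul_left T hMM) (by omega)
  have k2 : 4 * (T * (M * M)) ≤ T * M ^ 2 * c1 := by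
    calc 4 * (T * (M * M)) = T * M ^ 2 * 4 := by ring
      _ ≤ T * M ^ 2 * c1 := Nat.mul_le_mul_left _ (by omega)
  have k3 : 4 * (T * (M * c1)) ≤ T * M ^ 2 * c1 := by
    calc 4 * (T * (M * c1)) = T * (4 * M) * c1 := by ring
      _ ≤ T * M ^ 2 * c1 := by
          apply Nat.mul_le_mul _ (le_refl c1)
          apply Nat.mul_le_mul_left T
          calc 4 * M ≤ M * M := Nat.mul_le_mul h4 (le_refl M)
            _ = M ^ 2 := (sq M).symm
  have k4 : 4 * (T * L) ≤ T * M ^ 2 * c1 := by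
    rw [hc, hL]
    calc 4 * (T * (4 * T * M ^ 2)) = (T * M ^ 2) * (T * 16) := by ring
      _ ≤ (T * M ^ 2) * (T * M ^ 2) := Nat.mul_le_mul_left _ (Nat.mul_le_mul_left T hM2)
      _ ≤ (T * M ^ 2) * (2 * (4 * T * M ^ 2) * W) := by
          apply Nat.mul_le_mul_left
          calc T * M ^ 2 = 1 * (T * M ^ 2) * 1 := by ring
            _ ≤ 2 * (4 * (T * M ^ 2)) * W := by
                apply Nat.mul_le_mul _ hW
                exact Nat.mul_le_mul (by omega) (by omega)
            _ = 2 * (4 * T * M ^ 2) * W := by ring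
      _ = T * M ^ 2 * (2 * (4 * T * M ^ 2) * W) := by ring
  have hpos : 1 ≤ T * M ^ 2 * c1 := by
    calc (1:ℕ) = 1 * 1 * 1 := by norm_num
      _ ≤ T * M ^ 2 * c1 := Nat.mul_le_mul (Nat.mul_le_mul hT (by omega)) (by omega)
  have hLHS : T * (m + Vc * (c1 + e + 1) + L) ≤ T * (M + (M * c1 + M * M) + L) :=
    Nat.mul_le_mul_left T (by linarith)
  have expand : T * (M + (M * c1 + M * M) + L)
      = T * M + T * (M * c1) + T * (M * M) + T * L := by ring
  linarith

end StatementZero8a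
section StatementZero8b

open Classical Filter

variable {V : Type} [Fintype V]

lemma Breg_card (c : ℤ) (hc : 0 ≤ c) :
    (Breg (V := V) c).card = Fintype.card V * (c.toNat + 1) := by
  rw [Breg, Finset.card_product, Finset.card_univ, Int.card_Icc]
  congr 1
  omega

/-- The phase lemma: a good prefix ending in a `Qw` configuration can be
extended until either the energy went negative, or the running average
exceeded `t + 1`. -/
lemma phase {A : Arena V} {w : V → V → ℤ} {σ : List V → V} (hσ : A.IsStrategy A.V0 σ)
    (t : ℕ) {ρ : ℕ → V} {m : ℕ} (hg : GoodUpTo A σ ρ m)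
    (hNN : ∀ i ≤ m, 0 ≤ EL w ρ i) (hQ : (ρ m, EL w ρ m) ∈ Qw A w) :
    ∃ ρ' m', GoodUpTo A σ ρ' m' ∧ m < m' ∧ (∀ i ≤ m, ρ' i = ρ i) ∧
      ((∃ i ≤ m', EL w ρ' i < 0) ∨
        ((∀ i ≤ m', 0 ≤ EL w ρ' i) ∧ (ρ' m', EL w ρ' m') ∈ Qw A w ∧
          ((t : ℤ) + 1) * m' < ∑ i ∈ Finset.range m', EL w ρ' i)) := by
  obtain ⟨Vc, hVc⟩ : ∃ Vc, Vc = Fintype.card V := ⟨_, rfl⟩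
  obtain ⟨Wn, hWn⟩ : ∃ Wn, Wn = Wbd w := ⟨_, rfl⟩
  obtain ⟨T, hT⟩ : ∃ T, T = t + 1 := ⟨_, rfl⟩
  obtain ⟨e, he⟩ : ∃ e, e = (EL w ρ m).toNat := ⟨_, rfl⟩
  have he0 : (0 : ℤ) ≤ EL w ρ m := hQ.1
  have heq : (e : ℤ) = EL w ρ m := by rw [he]; exact Int.toNat_of_nonneg he0
  obtain ⟨M, hM⟩ : ∃ M, M = m + e + Vc + 4 := ⟨_, rfl⟩
  obtain ⟨L, hL⟩ : ∃ L, L = 4 * T * M ^ 2 := ⟨_, rfl⟩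
  obtain ⟨c1, hc1⟩ : ∃ c1, c1 = 2 * L * Wn := ⟨_, rfl⟩
  obtain ⟨c, hcdef⟩ : ∃ c : ℤ, c = (c1 : ℤ) + EL w ρ m := ⟨_, rfl⟩
  have hc1z : (c1 : ℤ) = 2 * (L : ℤ) * (Wn : ℤ) := by rw [hc1]; push_cast; ring
  have hWpos : (1 : ℤ) ≤ (Wn : ℤ) := by
    rw [hWn]; exact_mod_cast Wbd_pos w
  have hLWnn : (0 : ℤ) ≤ (L : ℤ) * (Wn : ℤ) := by positivity
  have hc0 : 0 ≤ c := by
    rw [hcdef]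
    linarith [Int.ofNat_nonneg c1, he0]
  have hecle : EL w ρ m ≤ c := by
    rw [hcdef]
    linarith [Int.ofNat_nonneg c1]
  obtain ⟨K, hK⟩ : ∃ K, K = (Breg (V := V) c).card := ⟨_, rfl⟩
  have hKval : K = Vc * (c1 + e + 1) := by
    rw [hK, Breg_card c hc0]
    have htn : c.toNat = c1 + e := by omega
    rw [htn, ← hVc]
  have hcover : (ρ m, EL w ρ m) ∈ Bset A w c K := hK ▸ Bset_cover A w hQ hecle
  obtain ⟨ρ₁, m₁, hg₁, hm₁l, hm₁u, hagr₁, hB0, hmid⟩ := descend hσ c K ρ m hg hcover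
  have hEL₁eq : ∀ i ≤ m, EL w ρ₁ i = EL w ρ i := fun i hi =>
    EL_congr (w := w) (n := m) hagr₁ hi
  rcases hB0 with hneg | ⟨hgt, hQ₁⟩
  · -- the energy went negative during the forcing phase
    simp only at hneg
    have hmne : m < m₁ := by
      rcases Nat.eq_or_lt_of_le hm₁l with heqm | h
      · exfalso
        have h5 : EL w ρ₁ m₁ = EL w ρ m := by rw [← heqm]; exact hEL₁eq m le_rfl
        omega
      · exact h
    exact ⟨ρ₁, m₁, hg₁, hmne, hagr₁, Or.inl ⟨m₁, le_rfl, hneg⟩⟩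
  · -- the energy exceeded c: drain
    simp only at hgt
    rw [hcdef] at hgt
    have hLW : (L : ℤ) * (Wn : ℤ) ≤ EL w ρ₁ m₁ := by
      have h6 : (c1 : ℤ) = (L:ℤ) * Wn + (L:ℤ) * Wn := by rw [hc1z]; ring
      linarith [he0, hgt]
    rw [hWn] at hLW
    obtain ⟨ρ₂, hg₂, hagr₂, hQ₂, hbd₂⟩ := drain hσ L ρ₁ m₁ hg₁ hQ₁ hLW
    rw [← hWn] at hbd₂
    have hLpos : 1 ≤ L := by
      rw [hL]
      have hT1 : 1 ≤ T := by omega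
      have hM1 : 1 ≤ M := by omega
      have h7 : 1 ≤ M ^ 2 := by
        calc (1:ℕ) = 1 * 1 := rfl
          _ ≤ M * M := Nat.mul_le_mul hM1 hM1
          _ = M ^ 2 := (sq M).symm
      calc (1:ℕ) = 1 * 1 * 1 := rfl
        _ ≤ 4 * T * M ^ 2 := Nat.mul_le_mul (Nat.mul_le_mul (by norm_num) hT1) h7
    obtain ⟨m2, hm2⟩ : ∃ m2, m2 = m₁ + L := ⟨_, rfl⟩
    rw [← hm2] at hg₂ hQ₂
    have hagr : ∀ i ≤ m, ρ₂ i = ρ i := fun i hi => by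
      rw [hagr₂ i (by omega), hagr₁ i hi]
    have hEL₂eq : ∀ i ≤ m₁, EL w ρ₂ i = EL w ρ₁ i := fun i hi =>
      EL_congr (w := w) (n := m₁) hagr₂ hi
    -- lower bound on the energy during the drain window
    have hwin : ∀ j ≤ L, ((L : ℤ) * Wn + 1) + ((L : ℤ) - j) * Wn ≤ EL w ρ₂ (m₁ + j) := by
      intro j hj
      have hb := hbd₂ j hj
      have hjle : (j : ℤ) ≤ (L : ℤ) := by exact_mod_cast hj
      linarith [he0, hgt, hb, hc1z]
    -- nonnegativity up to m2
    have hNN2 : ∀ i ≤ m2, 0 ≤ EL w ρ₂ i := by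
      intro i hi
      rcases le_or_gt i m with him | him
      · rw [EL_congr (w := w) (n := m) hagr him]
        exact hNN i him
      · rcases le_or_gt i m₁ with him1 | him1
        · rw [hEL₂eq i him1]
          rcases Nat.eq_or_lt_of_le him1 with heqi | hlti
          · subst heqi
            linarith [hgt, Int.ofNat_nonneg c1, he0]
          · exact hmid i (by omega) hlti
        · have h2 := hwin (i - m₁) (by omega)
          have heqi : m₁ + (i - m₁) = i := by omega
          rw [heqi] at h2
          have hjle' : ((i - m₁ : ℕ) : ℤ) ≤ (L : ℤ) := by
            exact_mod_cast (by omega : i - m₁ ≤ L)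
          have hp : (0:ℤ) ≤ ((L : ℤ) - ((i - m₁ : ℕ) : ℤ)) * Wn :=
            mul_nonneg (by linarith) (by linarith)
          linarith
    -- sum lower bound over the window
    have hsum : ((L : ℤ)) * ((L : ℤ) * Wn + 1) ≤ ∑ i ∈ Finset.range m2, EL w ρ₂ i := by
      have hsub : Finset.Ico m₁ m2 ⊆ Finset.range m2 := by
        intro i hi
        rw [Finset.mem_range]
        exact (Finset.mem_Ico.1 hi).2
      have h1 : ∑ i ∈ Finset.Ico m₁ m2, EL w ρ₂ i ≤ ∑ i ∈ Finset.range m2, EL w ρ₂ i := by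
        apply Finset.sum_le_sum_of_subset_of_nonneg hsub
        intro i hi _
        exact hNN2 i (by rw [Finset.mem_range] at hi; omega)
      have h2 : ((L : ℤ)) * ((L : ℤ) * Wn + 1) ≤ ∑ i ∈ Finset.Ico m₁ m2, EL w ρ₂ i := by
        have hcard : (Finset.Ico m₁ m2).card = L := by rw [Nat.card_Ico]; omega
        calc ((L : ℤ)) * ((L : ℤ) * Wn + 1)
            = (Finset.Ico m₁ m2).card • ((L : ℤ) * Wn + 1) := by
              rw [hcard, nsmul_eq_mul]
          _ ≤ ∑ i ∈ Finset.Ico m₁ m2, EL w ρ₂ i := by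
              apply Finset.card_nsmul_le_sum
              intro i hi
              rw [Finset.mem_Ico] at hi
              have h3 := hwin (i - m₁) (by omega)
              have heqi : m₁ + (i - m₁) = i := by omega
              rw [heqi] at h3
              have hjle' : ((i - m₁ : ℕ) : ℤ) ≤ (L : ℤ) := by
                exact_mod_cast (by omega : i - m₁ ≤ L)
              have hp : (0:ℤ) ≤ ((L : ℤ) - ((i - m₁ : ℕ) : ℤ)) * Wn :=
                mul_nonneg (by linarith) (by linarith)
              linarith
      linarith
    -- the average bound via the arithmetic lemma
    have harith := phase_arith Vc Wn T m e M L c1 (hWn ▸ Wbd_pos w) (by omega) hM hL hc1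
    have havg : ((t : ℤ) + 1) * m2 < ∑ i ∈ Finset.range m2, EL w ρ₂ i := by
      have hm2le : m2 ≤ m + K + L := by omega
      have hstep : T * m2 ≤ T * (m + Vc * (c1 + e + 1) + L) := by
        apply Nat.mul_le_mul_left
        rw [← hKval]
        exact by omega
      have h3 : T * m2 < L * (L * Wn + 1) := lt_of_le_of_lt hstep harith
      have h4 : ((T * m2 : ℕ) : ℤ) < ((L * (L * Wn + 1) : ℕ) : ℤ) := by exact_mod_cast h3
      push_cast at h4
      have h5 : ((t : ℤ) + 1) * m2 = ((T : ℕ) : ℤ) * (m2 : ℤ) := by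
        rw [hT]; push_cast; ring
      rw [h5]
      calc ((T : ℕ) : ℤ) * (m2 : ℤ) < (L : ℤ) * ((L : ℤ) * Wn + 1) := by linarith
        _ ≤ _ := hsum
    exact ⟨ρ₂, m2, hg₂, by omega, hagr, Or.inr ⟨hNN2, hQ₂, havg⟩⟩

end StatementZero8b
section StatementZero9

open Classical Filter

variable {V : Type} [Fintype V]

/-- Invariant carried through the iteration. -/
def Cnd (A : Arena V) (w : V → V → ℤ) (σ : List V → V) (ρ : ℕ → V) (m : ℕ) : Prop :=
  GoodUpTo A σ ρ m ∧ ((∃ i ≤ m, EL w ρ i < 0) ∨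
    ((∀ i ≤ m, 0 ≤ EL w ρ i) ∧ (ρ m, EL w ρ m) ∈ Qw A w))

/-- Payoff obtained at each iteration: negative energy or large average. -/
def Pay (w : V → V → ℤ) (t : ℕ) (ρ : ℕ → V) (m : ℕ) : Prop :=
  (∃ i ≤ m, EL w ρ i < 0) ∨ ((t : ℤ) + 1) * m < ∑ i ∈ Finset.range m, EL w ρ i

lemma step_lemma {A : Arena V} {w : V → V → ℤ} {σ : List V → V}
    (hσ : A.IsStrategy A.V0 σ) (t : ℕ) {ρ : ℕ → V} {m : ℕ} (hρm : Cnd A w σ ρ m) :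
    ∃ ρ' m', Cnd A w σ ρ' m' ∧ m < m' ∧ (∀ i ≤ m, ρ' i = ρ i) ∧ Pay w t ρ' m' := by
  obtain ⟨hg, hinv⟩ := hρm
  rcases hinv with ⟨i0, hi0, hneg⟩ | ⟨hNN, hQ⟩
  · -- already negative: extend one arbitrary step
    have key : ∃ x, A.E (ρ m) x ∧ (ρ m ∈ A.V0 → x = σ (prefixList ρ m)) := by
      by_cases h0 : ρ m ∈ A.V0
      · exact ⟨σ (prefixList ρ m), strat_edge hσ h0, fun _ => rfl⟩
      · exact ⟨(A.succ (ρ m)).choose, (A.succ (ρ m)).choose_spec, fun hv => absurd hv h0⟩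
    obtain ⟨x, hE, hxσ⟩ := key
    have hg' : GoodUpTo A σ (stepTo ρ m x) (m + 1) := GoodUpTo_stepTo hg hE hxσ
    have hagree : ∀ i ≤ m, (stepTo ρ m x) i = ρ i := stepTo_agree ρ m x
    have hneg' : EL w (stepTo ρ m x) i0 < 0 := by
      rw [EL_congr (w := w) (n := m) hagree hi0]
      exact hneg
    exact ⟨stepTo ρ m x, m + 1, ⟨hg', Or.inl ⟨i0, by omega, hneg'⟩⟩, by omega, hagree,
      Or.inl ⟨i0, by omega, hneg'⟩⟩
  · obtain ⟨ρ', m', hg', hlt, hagree, hout⟩ := phase hσ t hg hNN hQ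
    rcases hout with hnegc | ⟨hNN', hQ', havg⟩
    · exact ⟨ρ', m', ⟨hg', Or.inl hnegc⟩, hlt, hagree, Or.inl hnegc⟩
    · exact ⟨ρ', m', ⟨hg', Or.inr ⟨hNN', hQ'⟩⟩, hlt, hagree, Or.inr havg⟩

/-- Hard direction: if Player 0 wins no bounded-energy game, she wins no
average-energy game. -/
lemma hard_dir (A : Arena V) (w : V → V → ℤ)
    (hno : ∀ cap : ℕ, ¬ A.Player0Wins (EnergyLU w cap)) (t : ℕ) :
    ¬ A.Player0Wins (AvgEnergyL w (t : ℝ)) := by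
  rintro ⟨σ, hσ, hwin⟩
  -- the initial configuration is bad
  have hQI : ((A.vI, (0 : ℤ)) : V × ℤ) ∈ Qw A w := by
    refine ⟨le_rfl, fun hP => ?_⟩
    obtain ⟨cap, hcap⟩ := Set.mem_iUnion.1 hP
    exact hno cap.toNat (Safe_win A w cap hcap)
  -- the initial good prefix
  have hcnd0 : Cnd A w σ (fun _ => A.vI) 0 := by
    refine ⟨⟨rfl, fun i hi => absurd hi (by omega)⟩, Or.inr ⟨?_, ?_⟩⟩
    · intro i hi
      have : i = 0 := by omega
      rw [this, EL_zero]
    · rw [EL_zero]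
      exact hQI
  -- iterate the step lemma
  choose F G hC hlt hag hpay using fun (p : {q : (ℕ → V) × ℕ // Cnd A w σ q.1 q.2}) =>
    step_lemma hσ t p.2
  let seq : ℕ → {q : (ℕ → V) × ℕ // Cnd A w σ q.1 q.2} := fun k =>
    Nat.rec ⟨(fun _ => A.vI, 0), hcnd0⟩ (fun _ p => ⟨(F p, G p), hC p⟩) k
  have hseq_succ : ∀ k, seq (k + 1) = ⟨(F (seq k), G (seq k)), hC (seq k)⟩ := fun k => rfl
  have hmono : ∀ k, (seq k).1.2 < (seq (k + 1)).1.2 := fun k => hlt (seq k)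
  have hagree : ∀ k, ∀ i ≤ (seq k).1.2, (seq (k + 1)).1.1 i = (seq k).1.1 i :=
    fun k => hag (seq k)
  have hpayoff : ∀ k, Pay w t (seq (k + 1)).1.1 (seq (k + 1)).1.2 := fun k => hpay (seq k)
  have hmk : ∀ k, k ≤ (seq k).1.2 := by
    intro k
    induction k with
    | zero => omega
    | succ k ih => have := hmono k; omega
  have hmono' : ∀ k k', k ≤ k' → (seq k).1.2 ≤ (seq k').1.2 := by
    intro k k' hk
    induction k' with
    | zero =>
      have hk0 : k = 0 := by omega
      subst hk0
      exact le_rfl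
    | succ k' ih =>
      rcases Nat.le_succ_iff.1 hk with h | h
      · have h1 := hmono k'
        have h2 := ih h
        omega
      · subst h
        exact le_rfl
  have hagree' : ∀ k k', k ≤ k' → ∀ i ≤ (seq k).1.2, (seq k').1.1 i = (seq k).1.1 i := by
    intro k k' hk
    induction k' with
    | zero =>
      have : k = 0 := by omega
      subst this
      intro i _; rfl
    | succ k' ih =>
      rcases Nat.le_succ_iff.1 hk with h | h
      · intro i hi
        rw [hagree k' i (le_trans hi (hmono' k k' h)), ih h i hi]
      · subst h
        intro i _; rfl
  -- the limit play
  set rinf : ℕ → V := fun n => (seq n).1.1 n with hrinf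
  have hρval : ∀ k i, i ≤ (seq k).1.2 → rinf i = (seq k).1.1 i := by
    intro k i hi
    rcases le_or_gt i k with h | h
    · rw [hrinf]
      simp only
      exact (hagree' i k h i (hmk i)).symm ▸ (hagree' i k h i (hmk i)) ▸ rfl
    · rw [hrinf]
      simp only
      exact hagree' k i (le_of_lt h) i hi
  have hρval' : ∀ k i, i ≤ k → rinf i = (seq k).1.1 i := by
    intro k i hi
    exact hρval k i (le_trans hi (hmk k))
  have hplay : A.Play rinf := by
    constructor
    · rw [hrinf]
      simp only
      exact ((seq 0).2.1).1
    · intro n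
      have h1 : rinf n = (seq (n + 1)).1.1 n := hρval' (n + 1) n (by omega)
      have h2 : rinf (n + 1) = (seq (n + 1)).1.1 (n + 1) := hρval' (n + 1) (n + 1) le_rfl
      rw [h1, h2]
      have hgood := (seq (n + 1)).2.1
      exact (hgood.2 n (by have := hmk (n + 1); omega)).1
  have hcons : A.ConsistentWith A.V0 σ rinf := by
    intro n hn
    have h1 : rinf n = (seq (n + 1)).1.1 n := hρval' (n + 1) n (by omega)
    have h2 : rinf (n + 1) = (seq (n + 1)).1.1 (n + 1) := hρval' (n + 1) (n + 1) le_rfl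
    have hpre : prefixList rinf n = prefixList ((seq (n + 1)).1.1) n :=
      prefixList_congr (fun j hj => hρval' (n + 1) j (by omega))
    rw [h1] at hn
    rw [h2, hpre]
    have hgood := (seq (n + 1)).2.1
    exact (hgood.2 n (by have := hmk (n + 1); omega)).2 hn
  have hELval : ∀ k i, i ≤ (seq k).1.2 → EL w rinf i = EL w ((seq k).1.1) i := by
    intro k i hi
    exact EL_congr (w := w) (n := (seq k).1.2) (fun j hj => hρval k j hj) hi
  -- rinf is winning for the average-energy objective
  have hmem := hwin rinf hplay hcons
  obtain ⟨hEL0, hAvg⟩ := hmem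
  -- no negative payoff can occur
  have hnoneg : ∀ k, ¬ (∃ i ≤ (seq k).1.2, EL w ((seq k).1.1) i < 0) := by
    rintro k ⟨i, hi, hneg⟩
    have := hELval k i hi
    have h0 := hEL0 i
    omega
  have havgpay : ∀ k, ((t : ℤ) + 1) * (seq (k + 1)).1.2
      < ∑ i ∈ Finset.range (seq (k + 1)).1.2, EL w rinf i := by
    intro k
    rcases hpayoff k with hneg | havg
    · exact absurd hneg (hnoneg (k + 1))
    · have hsum : ∑ i ∈ Finset.range (seq (k + 1)).1.2, EL w rinf i
          = ∑ i ∈ Finset.range (seq (k + 1)).1.2, EL w ((seq (k + 1)).1.1) i := by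
        apply Finset.sum_congr rfl
        intro i hi
        exact hELval (k + 1) i (by rw [Finset.mem_range] at hi; omega)
      rw [hsum]
      exact havg
  -- turn into a real-valued average bound
  have havgreal : ∀ k, ((t : ℝ) + 1) ≤ avgEL w rinf ((seq (k + 1)).1.2) := by
    intro k
    have hm := hmk (k + 1)
    have hmpos : 0 < (seq (k + 1)).1.2 := by omega
    have h1 := havgpay k
    rw [avgEL, le_div_iff₀ (by exact_mod_cast hmpos)]
    have h2 : (((∑ i ∈ Finset.range (seq (k + 1)).1.2, EL w rinf i) : ℤ) : ℝ)
        = ∑ i ∈ Finset.range (seq (k + 1)).1.2, ((EL w rinf i : ℤ) : ℝ) := by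
      push_cast; ring
    have h3 : (((t : ℤ) + 1) * ((seq (k + 1)).1.2 : ℤ) : ℝ)
        < (((∑ i ∈ Finset.range (seq (k + 1)).1.2, EL w rinf i) : ℤ) : ℝ) := by
      exact_mod_cast h1
    rw [h2] at h3
    push_cast at h3 ⊢
    linarith
  -- contradiction with the limsup bound
  have hfreq : ∃ᶠ n in atTop, (((t : ℝ) + 1 : ℝ) : EReal) ≤ (avgEL w rinf n : EReal) := by
    rw [Filter.frequently_atTop]
    intro a
    refine ⟨(seq (a + 1)).1.2, ?_, EReal.coe_le_coe_iff.2 (havgreal a)⟩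
    have := hmk (a + 1)
    omega
  have hle := Filter.le_limsup_of_frequently_le hfreq
  have : (((t : ℝ) + 1 : ℝ) : EReal) ≤ (((t : ℕ) : ℝ) : EReal) := le_trans hle hAvg
  rw [EReal.coe_le_coe_iff] at this
  linarith

end StatementZero9
/-- Player 0 wins `(A, AvgEnergy_L(w,t))` for some threshold `t ∈ ℕ`
iff Player 0 wins `(A, Energy_LU(w,cap))` for some capacity `cap ∈ ℕ`. -/
theorem exists_threshold_iff_exists_cap {V : Type} [Fintype V] (A : Arena V)
    (w : V → V → ℤ) :
    (∃ t : ℕ, A.Player0Wins (AvgEnergyL w (t : ℝ))) ↔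
      (∃ cap : ℕ, A.Player0Wins (EnergyLU w cap)) := by
  constructor
  · rintro ⟨t, ht⟩
    by_contra hn
    push_neg at hn
    have hno : ∀ cap : ℕ, ¬ A.Player0Wins (EnergyLU w cap) := fun cap h => hn cap h
    exact hard_dir A w hno t ht
  · rintro ⟨cap, hcap⟩
    exact ⟨cap, easy_dir A w cap hcap⟩
end StatementZero3
end

section
/- Let A = (V, V0, V1, E, v_I) be an arena and w : E → ℤ a weight function. If Player 0 has a winning strategy σ for (A, AvgEnergy_L(w, t)) for some t ∈ ℕ, then there exist a capacity cap ∈ ℕ and a strategy σ' for Player 0 that is winning for (A, Energy_LU(w, cap)). -/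
namespace AEProof

variable {V : Type}

theorem ELl_snoc (w : V → V → ℤ) : ∀ (g : List V) (hg : g ≠ []) (v : V),
    ELl w (g ++ [v]) = ELl w g + w (g.getLast hg) v
  | [a], _, v => by simp [ELl]
  | a :: b :: g, _, v => by
    have h1 : (a :: b :: g) ++ [v] = a :: ((b :: g) ++ [v]) := rfl
    have h2 : (b :: g) ++ [v] = b :: (g ++ [v]) := rfl
    rw [h1, h2]
    show w a b + ELl w (b :: (g ++ [v])) = _
    rw [← h2, ELl_snoc w (b :: g) (by simp) v]
    show _ = w a b + ELl w (b :: g) + _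
    rw [List.getLast_cons_cons]
    ring

theorem ELl_nonneg_bound (w : V → V → ℤ) (C : ℤ) (hC : 0 ≤ C) (hw : ∀ u v, w u v ≤ C) :
    ∀ l : List V, ELl w l ≤ l.length * C
  | [] => by simp [ELl]
  | [a] => by simp [ELl]; positivity
  | a :: b :: l => by
    show w a b + ELl w (b :: l) ≤ _
    have := ELl_nonneg_bound w C hC hw (b :: l)
    have hab := hw a b
    simp only [List.length_cons] at *
    push_cast at this ⊢
    nlinarith

theorem prefixList_succ (ρ : ℕ → V) (n : ℕ) :
    prefixList ρ (n + 1) = prefixList ρ n ++ [ρ (n + 1)] := by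
  unfold prefixList
  rw [show n + 1 + 1 = (n+1) + 1 from rfl, List.range_succ, List.map_append]
  rfl

theorem prefixList_length (ρ : ℕ → V) (n : ℕ) : (prefixList ρ n).length = n + 1 := by
  simp [prefixList]

theorem prefixList_ne_nil (ρ : ℕ → V) (n : ℕ) : prefixList ρ n ≠ [] := by
  intro h
  have := prefixList_length ρ n
  rw [h] at this; simp at this

theorem prefixList_getD (ρ : ℕ → V) (n i : ℕ) (hi : i ≤ n) (d : V) :
    (prefixList ρ n).getD i d = ρ i := by
  rw [List.getD_eq_getElem _ _ (by simp [prefixList]; omega)]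
  simp [prefixList]

theorem prefixList_take (ρ : ℕ → V) (n i : ℕ) (hi : i ≤ n) :
    (prefixList ρ n).take (i + 1) = prefixList ρ i := by
  unfold prefixList
  rw [← List.map_take, List.take_range]
  congr 2
  omega

theorem prefixList_getLast? (ρ : ℕ → V) (n : ℕ) :
    (prefixList ρ n).getLast? = some (ρ n) := by
  cases n with
  | zero => rfl
  | succ m => rw [prefixList_succ]; exact List.getLast?_concat

theorem EL_eq_ELl (w : V → V → ℤ) (ρ : ℕ → V) (n : ℕ) :
    EL w ρ n = ELl w (prefixList ρ n) := by
  induction n with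
  | zero => simp [EL, prefixList, ELl, List.range_succ]
  | succ m ih =>
    rw [EL, Finset.sum_range_succ, ← EL, prefixList_succ,
      ELl_snoc w _ (prefixList_ne_nil ρ m), ih]
    congr 2
    have := prefixList_getLast? ρ m
    rw [List.getLast?_eq_getLast (prefixList_ne_nil ρ m), Option.some_inj] at this
    exact this.symm

end AEProof

namespace AEProof

variable {V : Type}

theorem getD_take' (l : List V) (m i : ℕ) (d : V) (h : i < m) :
    (l.take m).getD i d = l.getD i d := by
  by_cases hi : i < l.length
  · rw [List.getD_eq_getElem _ _ (by simp; omega), List.getD_eq_getElem _ _ hi]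
    simp [List.getElem_take]
  · rw [List.getD_eq_default _ _ (by simp; omega), List.getD_eq_default _ _ (by omega)]

/-- A locally consistent finite play prefix. -/
def LG (A : Arena V) (σ : List V → V) (l : List V) : Prop :=
  l ≠ [] ∧ l.getD 0 A.vI = A.vI ∧
  ∀ i, i + 1 < l.length →
    A.E (l.getD i A.vI) (l.getD (i + 1) A.vI) ∧
    (l.getD i A.vI ∈ A.V0 → l.getD (i + 1) A.vI = σ (l.take (i + 1)))

variable (A : Arena V) (σ : List V → V)

theorem LG_take {l : List V} (hl : LG A σ l) (m : ℕ) (hm : 1 ≤ m) : LG A σ (l.take m) := by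
  obtain ⟨hne, h0, hstep⟩ := hl
  refine ⟨?_, ?_, ?_⟩
  · intro h
    have h2 : (l.take m).length = min m l.length := List.length_take
    rw [h] at h2
    simp only [List.length_nil] at h2
    have := List.length_pos_iff.mpr hne
    omega
  · rw [getD_take' _ _ _ _ (by omega)]; exact h0
  · intro i hi
    have hlen : (l.take m).length = min m l.length := by simp
    rw [hlen] at hi
    rw [getD_take' _ _ _ _ (by omega), getD_take' _ _ _ _ (by omega),
      List.take_take, min_eq_left (by omega : i + 1 ≤ m)]
    exact hstep i (by omega)

theorem LG_snoc {l : List V} (hl : LG A σ l) (v : V)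
    (he : A.E (l.getD (l.length - 1) A.vI) v)
    (hv : l.getD (l.length - 1) A.vI ∈ A.V0 → v = σ l) : LG A σ (l ++ [v]) := by
  obtain ⟨hne, h0, hstep⟩ := hl
  have hlpos : 1 ≤ l.length := List.length_pos_iff.mpr hne
  refine ⟨by simp, ?_, ?_⟩
  · rw [List.getD_append _ _ _ _ (by omega)]; exact h0
  · intro i hi
    simp only [List.length_append, List.length_cons, List.length_nil] at hi
    by_cases hcase : i + 1 < l.length
    · rw [List.getD_append _ _ _ _ (by omega), List.getD_append _ _ _ _ hcase,
        List.take_append_of_le_length (by omega : i + 1 ≤ l.length)]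
      exact hstep i hcase
    · have hieq : i = l.length - 1 := by omega
      have h1 : i + 1 = l.length := by omega
      have ht : (l ++ [v]).take (i+1) = l := by
        rw [List.take_append_of_le_length (le_of_eq h1), h1, List.take_length]
      have hg1 : (l ++ [v]).getD i A.vI = l.getD i A.vI := List.getD_append _ _ _ _ (by omega)
      have hg2 : (l ++ [v]).getD (i+1) A.vI = v := by
        rw [List.getD_append_right _ _ _ _ (by omega : l.length ≤ i + 1)]
        simp [h1]
      rw [ht, hg1, hg2, hieq]
      exact ⟨he, hv⟩

theorem LG_prefixList {ρ : ℕ → V} (hp : A.Play ρ) (hc : A.ConsistentWith A.V0 σ ρ) (n : ℕ) :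
    LG A σ (prefixList ρ n) := by
  refine ⟨prefixList_ne_nil ρ n, ?_, ?_⟩
  · rw [prefixList_getD ρ n 0 (by omega)]; exact hp.1
  · intro i hi
    rw [prefixList_length] at hi
    rw [prefixList_getD ρ n i (by omega), prefixList_getD ρ n (i+1) (by omega),
      prefixList_take ρ n i (by omega)]
    exact ⟨hp.2 i, hc i⟩

theorem play_of_LG_prefixes {ρ : ℕ → V} (h : ∀ n, LG A σ (prefixList ρ n)) :
    A.Play ρ ∧ A.ConsistentWith A.V0 σ ρ := by
  have key : ∀ n, A.E (ρ n) (ρ (n+1)) ∧ (ρ n ∈ A.V0 → ρ (n+1) = σ (prefixList ρ n)) := by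
    intro n
    have h2 := (h (n+1)).2.2 n (by rw [prefixList_length]; omega)
    rwa [prefixList_getD ρ (n+1) n (by omega), prefixList_getD ρ (n+1) (n+1) (by omega),
      prefixList_take ρ (n+1) n (by omega)] at h2
  refine ⟨⟨?_, fun n => (key n).1⟩, fun n => (key n).2⟩
  have h0 := (h 0).2.1
  rwa [prefixList_getD ρ 0 0 (by omega)] at h0

open Classical in
/-- The default next move. -/
noncomputable def nxt (g : List V) : V :=
  if (g.getD (g.length - 1) A.vI) ∈ A.V0 then σ g
  else Classical.choose (A.succ (g.getD (g.length - 1) A.vI))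

/-- Extending a finite prefix to longer and longer prefixes. -/
noncomputable def ext (l : List V) : ℕ → List V
  | 0 => l
  | n + 1 => ext l n ++ [nxt A σ (ext l n)]

theorem ext_length (l : List V) (n : ℕ) : (ext A σ l n).length = l.length + n := by
  induction n with
  | zero => rfl
  | succ m ih => show (ext A σ l m ++ _).length = _; simp [ih]; omega

theorem ext_getD (l : List V) (n k m : ℕ) (d : V) (hm : m < (ext A σ l n).length) :
    (ext A σ l (n + k)).getD m d = (ext A σ l n).getD m d := by
  induction k with
  | zero => rfl
  | succ j ih =>
    show (ext A σ l (n + j) ++ _).getD m d = _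
    rw [List.getD_append _ _ _ _ (by rw [ext_length] at *; omega)]
    exact ih

theorem ext_prefix (l : List V) (n k : ℕ) : ext A σ l n <+: ext A σ l (n + k) := by
  induction k with
  | zero => exact List.prefix_refl _
  | succ j ih => exact ih.trans ⟨[nxt A σ (ext A σ l (n+j))], rfl⟩

/-- The extended play. -/
noncomputable def extPlay (l : List V) : ℕ → V :=
  fun m => (ext A σ l (m + 1)).getD m A.vI

theorem extPlay_eq (l : List V) (n m : ℕ) (hm : m < (ext A σ l n).length) :
    extPlay A σ l m = (ext A σ l n).getD m A.vI := by
  unfold extPlay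
  rcases le_total (m+1) n with h | h
  · obtain ⟨k, hk⟩ : ∃ k, n = (m+1) + k := ⟨n - (m+1), by omega⟩
    rw [hk, ext_getD A σ l (m+1) k m A.vI (by rw [ext_length]; omega)]
  · obtain ⟨k, hk⟩ : ∃ k, m+1 = n + k := ⟨m+1 - n, by omega⟩
    rw [hk, ext_getD A σ l n k m A.vI hm]

theorem extPlay_prefixList (l : List V) (m : ℕ) :
    prefixList (extPlay A σ l) m = (ext A σ l (m + 1)).take (m + 1) := by
  apply List.ext_getElem
  · rw [prefixList_length, List.length_take, ext_length]; omega
  · intro i h1 h2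
    rw [prefixList_length] at h1
    have hilen : i < (ext A σ l (m+1)).length := by rw [ext_length]; omega
    have ha : (prefixList (extPlay A σ l) m)[i] =
        (prefixList (extPlay A σ l) m).getD i A.vI :=
      (List.getD_eq_getElem _ _ (by rw [prefixList_length]; omega)).symm
    have hb : (List.take (m+1) (ext A σ l (m+1)))[i] =
        (List.take (m+1) (ext A σ l (m+1))).getD i A.vI :=
      (List.getD_eq_getElem _ _ h2).symm
    rw [ha, hb, prefixList_getD _ _ _ (by omega), getD_take' _ _ _ _ h1]
    exact extPlay_eq A σ l (m+1) i hilen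

end AEProof

namespace AEProof

variable {V : Type} (A : Arena V) (σ : List V → V)

theorem take_of_prefix {l g : List V} (h : l <+: g) : g.take l.length = l :=
  (List.prefix_iff_eq_take.mp h).symm

theorem LG_extend (hσs : A.IsStrategy A.V0 σ) (l : List V) (hl : LG A σ l) :
    ∃ ρ, A.Play ρ ∧ A.ConsistentWith A.V0 σ ρ ∧ prefixList ρ (l.length - 1) = l := by
  have hne := hl.1
  have hlpos : 1 ≤ l.length := List.length_pos_iff.mpr hne
  set ρ := extPlay A σ l with hρ
  -- the prefix fact
  have hpre : ∀ m, l.length ≤ m + 1 → prefixList ρ m = ext A σ l (m + 1 - l.length) := by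
    intro m hm
    rw [extPlay_prefixList]
    set k := m + 1 - l.length with hk
    have h1 : ext A σ l k <+: ext A σ l (m + 1) := by
      have := ext_prefix A σ l k (m + 1 - k)
      rwa [show k + (m + 1 - k) = m + 1 by omega] at this
    have h2 : (ext A σ l k).length = m + 1 := by rw [ext_length]; omega
    have h3 := take_of_prefix h1
    rw [h2] at h3
    exact h3
  have hpre2 : ∀ m, m + 1 < l.length → prefixList ρ m = l.take (m + 1) := by
    intro m hm
    rw [extPlay_prefixList]
    have h1 : l <+: ext A σ l (m + 1) := by
      have := ext_prefix A σ l 0 (m + 1)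
      rwa [Nat.zero_add] at this
    calc (ext A σ l (m+1)).take (m+1) = ((ext A σ l (m+1)).take l.length).take (m+1) := by
          rw [List.take_take, min_eq_left (by omega)]
      _ = l.take (m+1) := by rw [take_of_prefix h1]
  have hval : ∀ m, m < l.length → ρ m = l.getD m A.vI := by
    intro m hm
    have := extPlay_eq A σ l 0 m (by rw [ext_length]; omega)
    exact this
  -- the step structure for m+1 ≥ |l|
  have hstep : ∀ m, l.length ≤ m + 1 →
      ρ (m + 1) = nxt A σ (ext A σ l (m + 1 - l.length)) ∧
      ρ m = (ext A σ l (m + 1 - l.length)).getD ((ext A σ l (m + 1 - l.length)).length - 1) A.vI := by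
    intro m hm
    set k := m + 1 - l.length with hk
    have hlen : (ext A σ l k).length = m + 1 := by rw [ext_length]; omega
    constructor
    · have h1 : ρ (m+1) = (ext A σ l (k+1)).getD (m+1) A.vI :=
        extPlay_eq A σ l (k+1) (m+1) (by rw [ext_length]; omega)
      rw [h1]
      show (ext A σ l k ++ [nxt A σ (ext A σ l k)]).getD (m+1) A.vI = _
      rw [List.getD_append_right _ _ _ _ (by omega : (ext A σ l k).length ≤ m + 1)]
      rw [hlen]
      simp
    · rw [hlen]
      simp only [Nat.add_sub_cancel]
      exact extPlay_eq A σ l k m (by omega)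
  -- main combined fact
  have main : ∀ m, A.E (ρ m) (ρ (m+1)) ∧ (ρ m ∈ A.V0 → ρ (m+1) = σ (prefixList ρ m)) := by
    intro m
    by_cases hc : m + 1 < l.length
    · have e1 : ρ m = l.getD m A.vI := hval m (by omega)
      have e2 : ρ (m+1) = l.getD (m+1) A.vI := hval (m+1) hc
      have h3 := hl.2.2 m hc
      refine ⟨by rw [e1, e2]; exact h3.1, ?_⟩
      intro hm0
      rw [e2, hpre2 m hc]
      apply h3.2
      rwa [← e1]
    · push_neg at hc
      obtain ⟨e1, e2⟩ := hstep m hc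
      set k := m + 1 - l.length with hk
      set g := ext A σ l k with hg
      have hgne : g ≠ [] := by
        intro h
        have := ext_length A σ l k
        rw [← hg, h] at this
        simp at this
        omega
      have hglast : g.getLast hgne = ρ m := by
        rw [List.getLast_eq_getElem, ← List.getD_eq_getElem g A.vI]
        exact e2.symm
      have hrec : g.dropLast ++ [ρ m] = g := by
        rw [← hglast]
        exact List.dropLast_append_getLast hgne
      by_cases hm0 : ρ m ∈ A.V0
      · have hnxt : nxt A σ g = σ g := by
          unfold nxt
          rw [e2] at hm0
          rw [if_pos hm0]
        constructor
        · rw [e1, hnxt]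
          have := hσs g.dropLast (ρ m) hm0
          rwa [hrec] at this
        · intro _
          rw [e1, hnxt, hpre m hc]
      · have hnxt : nxt A σ g = Classical.choose (A.succ (g.getD (g.length - 1) A.vI)) := by
          unfold nxt
          rw [e2] at hm0
          rw [if_neg hm0]
        constructor
        · rw [e1, hnxt, e2]
          exact Classical.choose_spec _
        · intro hm0'; exact absurd hm0' hm0
  have hplay : A.Play ρ := by
    refine ⟨?_, fun n => (main n).1⟩
    rw [hval 0 (by omega)]
    exact hl.2.1
  refine ⟨ρ, hplay, fun n => (main n).2, ?_⟩
  rw [hpre (l.length - 1) (by omega)]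
  show ext A σ l (l.length - 1 + 1 - l.length) = l
  rw [show l.length - 1 + 1 - l.length = 0 by omega]
  rfl

end AEProof

namespace AEProof

variable {V : Type} (A : Arena V) (σ : List V → V) (w : V → V → ℤ) (t : ℕ)

theorem ELl_nonneg_of_LG (hσ : A.WinningStrategy A.V0 (AvgEnergyL w (t : ℝ)) σ)
    {l : List V} (hl : LG A σ l) : 0 ≤ ELl w l := by
  obtain ⟨ρ, hp, hc, hpl⟩ := LG_extend A σ hσ.1 l hl
  have h := (hσ.2 ρ hp hc).1 (l.length - 1)
  rwa [EL_eq_ELl, hpl] at h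

theorem exists_low (hσ : A.WinningStrategy A.V0 (AvgEnergyL w (t : ℝ)) σ)
    {ρ : ℕ → V} (hp : A.Play ρ) (hc : A.ConsistentWith A.V0 σ ρ) (N : ℕ) :
    ∃ n, N ≤ n ∧ EL w ρ n ≤ (t : ℤ) := by
  by_contra hcon
  push_neg at hcon
  have hmem := hσ.2 ρ hp hc
  have hE : ∀ n, 0 ≤ EL w ρ n := hmem.1
  have hA : Filter.limsup (fun n => (avgEL w ρ n : EReal)) Filter.atTop ≤ ((t : ℝ) : EReal) :=
    hmem.2
  have hlt : ((t : ℝ) : EReal) < (((t : ℝ) + 1/2 : ℝ) : EReal) := by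
    rw [EReal.coe_lt_coe_iff]; linarith
  have hev := Filter.eventually_lt_of_limsup_lt (lt_of_le_of_lt hA hlt)
  rw [Filter.eventually_atTop] at hev
  obtain ⟨M, hM⟩ := hev
  set n : ℕ := max M (2 * N * (t + 1) + 1) with hn
  have hn1 : 2 * N * (t + 1) + 1 ≤ n := le_max_right _ _
  have hNn : N ≤ n := by nlinarith
  have hlow := hM n (le_max_left _ _)
  rw [EReal.coe_lt_coe_iff] at hlow
  -- lower bound on the sum of energy levels
  have hsum : ((n : ℤ) - N) * (t + 1) ≤ ∑ i ∈ Finset.range n, EL w ρ i := by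
    rw [← Finset.sum_range_add_sum_Ico _ hNn]
    have h1 : (0 : ℤ) ≤ ∑ i ∈ Finset.range N, EL w ρ i :=
      Finset.sum_nonneg fun i _ => hE i
    have h2 : ((n : ℤ) - N) * (t + 1) ≤ ∑ i ∈ Finset.Ico N n, EL w ρ i := by
      have := Finset.card_nsmul_le_sum (Finset.Ico N n) (fun i => EL w ρ i) ((t : ℤ) + 1)
        (fun i hi => by
          have h := hcon i (Finset.mem_Ico.mp hi).1
          show (t : ℤ) + 1 ≤ EL w ρ i
          omega)
      rw [Nat.card_Ico] at this
      calc ((n : ℤ) - N) * (t + 1) = ((n - N : ℕ) : ℤ) * (t + 1) := by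
            rw [Nat.cast_sub hNn]
        _ ≤ _ := by rwa [nsmul_eq_mul] at this
    linarith
  -- hence the average is large
  have hnpos : (0 : ℝ) < n := by
    have h1 : (1 : ℕ) ≤ n := by omega
    exact_mod_cast Nat.lt_of_lt_of_le Nat.zero_lt_one h1
  have h3 : ((n : ℝ) - N) * ((t : ℝ) + 1) ≤ ∑ i ∈ Finset.range n, (EL w ρ i : ℝ) := by
    exact_mod_cast hsum
  have hn1R : 2 * (N : ℝ) * ((t : ℝ) + 1) + 1 ≤ (n : ℝ) := by exact_mod_cast hn1
  have havg : (t : ℝ) + 1/2 ≤ avgEL w ρ n := by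
    unfold avgEL
    rw [le_div_iff₀ hnpos]
    nlinarith [h3, hn1R]
  linarith

end AEProof

namespace AEProof

variable {V : Type} [Fintype V] (A : Arena V) (σ : List V → V) (w : V → V → ℤ) (t : ℕ)

/-- Number of low prefixes (energy level at most `t`) of a play. -/
def lowCount (ρ : ℕ → V) (n : ℕ) : ℕ :=
  ((Finset.range (n + 1)).filter (fun i => EL w ρ i ≤ (t : ℤ))).card

/-- Number of low prefixes of a finite prefix. -/
def lows (l : List V) : ℕ :=
  ((Finset.range l.length).filter (fun i => ELl w (l.take (i + 1)) ≤ (t : ℤ))).card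

theorem lows_prefixList (ρ : ℕ → V) (n : ℕ) :
    lows w t (prefixList ρ n) = lowCount w t ρ n := by
  unfold lows lowCount
  rw [prefixList_length]
  congr 1
  apply Finset.filter_congr
  intro i hi
  rw [Finset.mem_range] at hi
  rw [prefixList_take ρ n i (by omega), ← EL_eq_ELl]

theorem lows_take (l : List V) (m : ℕ) : lows w t (l.take m) ≤ lows w t l := by
  unfold lows
  apply Finset.card_le_card
  intro i hi
  rw [Finset.mem_filter, Finset.mem_range] at hi
  rw [Finset.mem_filter, Finset.mem_range]
  rw [List.length_take] at hi
  obtain ⟨hi1, hi2⟩ := hi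
  rw [List.take_take, min_eq_left (by omega : i + 1 ≤ m)] at hi2
  exact ⟨by omega, hi2⟩

theorem lowCount_grow {ρ : ℕ → V} (hl : ∀ N, ∃ n, N ≤ n ∧ EL w ρ n ≤ (t : ℤ)) :
    ∀ m, ∃ n, m ≤ lowCount w t ρ n := by
  intro m
  induction m with
  | zero => exact ⟨0, Nat.zero_le _⟩
  | succ j ih =>
    obtain ⟨n, hn⟩ := ih
    obtain ⟨n', hn'1, hn'2⟩ := hl (n + 1)
    refine ⟨n', ?_⟩
    have hsub : insert n' ((Finset.range (n + 1)).filter (fun i => EL w ρ i ≤ (t : ℤ))) ⊆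
        (Finset.range (n' + 1)).filter (fun i => EL w ρ i ≤ (t : ℤ)) := by
      intro i hi
      rw [Finset.mem_insert] at hi
      rw [Finset.mem_filter, Finset.mem_range]
      rcases hi with rfl | hi
      · exact ⟨by omega, hn'2⟩
      · rw [Finset.mem_filter, Finset.mem_range] at hi
        exact ⟨by omega, hi.2⟩
    have hnotmem : n' ∉ (Finset.range (n + 1)).filter (fun i => EL w ρ i ≤ (t : ℤ)) := by
      rw [Finset.mem_filter, Finset.mem_range]
      omega
    have := Finset.card_le_card hsub
    rw [Finset.card_insert_of_notMem hnotmem] at this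
    unfold lowCount at hn ⊢
    omega

theorem bounded_len (hσ : A.WinningStrategy A.V0 (AvgEnergyL w (t : ℝ)) σ) (K : ℕ) :
    ∃ L, ∀ l, LG A σ l → lows w t l ≤ K → l.length ≤ L := by
  by_contra hcon
  push_neg at hcon
  set Big : List V → Prop :=
    fun g => ∀ L, ∃ l, (LG A σ l ∧ lows w t l ≤ K) ∧ g <+: l ∧ L < l.length with hBig
  have hbig0 : Big [A.vI] := by
    intro L
    obtain ⟨l, hl1, hl2, hl3⟩ := hcon L
    obtain ⟨a, l', rfl⟩ := List.exists_cons_of_ne_nil hl1.1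
    have ha : a = A.vI := hl1.2.1
    exact ⟨a :: l', ⟨hl1, hl2⟩, by rw [ha]; exact ⟨l', rfl⟩, hl3⟩
  have hmem : ∀ g, Big g → g ≠ [] → LG A σ g ∧ lows w t g ≤ K := by
    intro g hg hne
    obtain ⟨l, ⟨hl1, hl2⟩, hpre, _⟩ := hg g.length
    have hgt : g = l.take g.length := List.prefix_iff_eq_take.mp hpre
    constructor
    · rw [hgt]; exact LG_take A σ hl1 _ (List.length_pos_iff.mpr hne)
    · rw [hgt]; exact le_trans (lows_take w t l _) hl2
  have hstep : ∀ g, Big g → ∃ v, Big (g ++ [v]) := by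
    intro g hg
    by_contra hno
    push_neg at hno
    simp only [hBig, not_forall, not_exists, not_and, not_lt] at hno
    choose f hf using hno
    obtain ⟨l, hl, hpre, hlen⟩ := hg ((Finset.univ : Finset V).sup f + g.length + 1)
    obtain ⟨r, rfl⟩ := hpre
    have hr : r ≠ [] := by
      intro h
      rw [h, List.append_nil] at hlen
      omega
    obtain ⟨v, r', rfl⟩ := List.exists_cons_of_ne_nil hr
    have hpre2 : g ++ [v] <+: g ++ v :: r' := ⟨r', by simp⟩
    have := hf v (g ++ v :: r') hl hpre2
    have hsup : f v ≤ (Finset.univ : Finset V).sup f := Finset.le_sup (Finset.mem_univ v)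
    omega
  -- build the infinite branch
  let B : ℕ → {g : List V // Big g} := fun n => Nat.rec ⟨[A.vI], hbig0⟩
    (fun _ p => ⟨p.1 ++ [Classical.choose (hstep p.1 p.2)],
      Classical.choose_spec (hstep p.1 p.2)⟩) n
  have hBsucc : ∀ n, (B (n + 1)).1 = (B n).1 ++ [Classical.choose (hstep (B n).1 (B n).2)] :=
    fun n => rfl
  have hBlen : ∀ n, (B n).1.length = n + 1 := by
    intro n
    induction n with
    | zero => rfl
    | succ j ih => rw [hBsucc]; simp [ih]
  set ρ : ℕ → V := fun m => (B m).1.getD m A.vI with hρ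
  have hpl : ∀ n, prefixList ρ n = (B n).1 := by
    intro n
    induction n with
    | zero => rfl
    | succ j ih =>
      rw [prefixList_succ, ih, hBsucc]
      congr 1
      show [ρ (j + 1)] = _
      have : ρ (j + 1) = (B (j + 1)).1.getD (j + 1) A.vI := rfl
      rw [this, hBsucc]
      rw [List.getD_append_right _ _ _ _ (by rw [hBlen])]
      rw [hBlen]
      simp
  have hLG : ∀ n, LG A σ (prefixList ρ n) := by
    intro n
    rw [hpl]
    exact (hmem (B n).1 (B n).2 (by
      intro h
      have := hBlen n
      rw [h] at this
      simp at this)).1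
  obtain ⟨hplay, hcons⟩ := play_of_LG_prefixes A σ hLG
  have hlowAll := exists_low A σ w t hσ hplay hcons
  obtain ⟨n, hn⟩ := lowCount_grow w t hlowAll (K + 1)
  have h1 : lows w t (prefixList ρ n) ≤ K := by
    rw [hpl]
    exact (hmem (B n).1 (B n).2 (by
      intro h
      have := hBlen n
      rw [h] at this
      simp at this)).2
  rw [lows_prefixList] at h1
  omega

end AEProof

namespace AEProof

variable {V : Type} [Fintype V] (A : Arena V) (σ : List V → V) (w : V → V → ℤ) (t : ℕ)

/-- All low positions in `l` carry pairwise distinct (vertex, energy) configurations. -/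
def DLows (l : List V) : Prop :=
  ∀ i j, i < j → j < l.length → ELl w (l.take (j + 1)) ≤ (t : ℤ) →
    ELl w (l.take (i + 1)) = ELl w (l.take (j + 1)) →
    l.getD i A.vI ≠ l.getD j A.vI

theorem lows_le_K (hσ : A.WinningStrategy A.V0 (AvgEnergyL w (t : ℝ)) σ)
    {l : List V} (hl : LG A σ l) (hd : DLows A w t l) :
    lows w t l ≤ Fintype.card V * (t + 1) := by
  classical
  have hcard : ((Finset.univ : Finset V) ×ˢ Finset.range (t + 1)).card =
      Fintype.card V * (t + 1) := by
    rw [Finset.card_product, Finset.card_range, Finset.card_univ]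
  rw [← hcard]
  apply Finset.card_le_card_of_injOn
    (fun i => (l.getD i A.vI, (ELl w (l.take (i + 1))).toNat))
  · intro i hi
    rw [Finset.mem_coe, Finset.mem_filter, Finset.mem_range] at hi
    rw [Finset.mem_coe, Finset.mem_product]
    refine ⟨Finset.mem_univ _, Finset.mem_range.mpr ?_⟩
    have h0 : 0 ≤ ELl w (l.take (i + 1)) :=
      ELl_nonneg_of_LG A σ w t hσ (LG_take A σ hl (i + 1) (by omega))
    beta_reduce
    omega
  · intro i hi j hj hij
    rw [Finset.coe_filter, Set.mem_setOf_eq, Finset.mem_range] at hi hj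
    simp only [Prod.mk.injEq] at hij
    by_contra hne
    have h0i : 0 ≤ ELl w (l.take (i + 1)) :=
      ELl_nonneg_of_LG A σ w t hσ (LG_take A σ hl (i + 1) (by omega))
    have h0j : 0 ≤ ELl w (l.take (j + 1)) :=
      ELl_nonneg_of_LG A σ w t hσ (LG_take A σ hl (j + 1) (by omega))
    have hELeq : ELl w (l.take (i + 1)) = ELl w (l.take (j + 1)) := by omega
    rcases Nat.lt_trichotomy i j with h | h | h
    · exact hd i j h hj.1 hj.2 hELeq hij.1
    · exact hne h
    · exact hd j i h hi.1 hi.2 hELeq.symm hij.1.symm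

/-- Valid cut points. -/
def Q (g' : List V) (v : V) (i : ℕ) : Prop :=
  1 ≤ i ∧ i ≤ g'.length ∧ g'.getD (i - 1) A.vI = v ∧ ELl w (g'.take i) = ELl w g'

theorem Q_ex (g : List V) (v : V) : ∃ i, Q A w (g ++ [v]) v i := by
  refine ⟨(g ++ [v]).length, by simp, le_refl _, ?_, by rw [List.take_length]⟩
  rw [show (g ++ [v]).length - 1 = g.length by simp,
    List.getD_append_right _ _ _ _ (le_refl _)]
  simp

open Classical in
/-- One step of the loop-cutting transformation. -/
noncomputable def step (g : List V) (v : V) : List V :=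
  if ELl w (g ++ [v]) ≤ (t : ℤ) then
    (g ++ [v]).take (Nat.find (Q_ex A w g v))
  else g ++ [v]

open Classical in
theorem step_spec (g : List V) (v : V) : ∃ i, step A w t g v = (g ++ [v]).take i ∧
    Q A w (g ++ [v]) v i ∧
    (ELl w (g ++ [v]) ≤ (t : ℤ) → ∀ j, Q A w (g ++ [v]) v j → i ≤ j) := by
  unfold step
  split_ifs with h
  · exact ⟨Nat.find (Q_ex A w g v), rfl, Nat.find_spec (Q_ex A w g v),
      fun _ j hj => Nat.find_min' _ hj⟩
  · refine ⟨(g ++ [v]).length, by rw [List.take_length], ?_, fun hc => absurd hc h⟩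
    have := Q_ex A w g v
    exact ⟨by simp, le_refl _, by
      rw [show (g ++ [v]).length - 1 = g.length by simp,
        List.getD_append_right _ _ _ _ (le_refl _)]
      simp, by rw [List.take_length]⟩

/-- The loop-cutting transformation on histories. -/
noncomputable def Phi : List V → List V := fun l => l.foldl (step A w t) []

theorem Phi_snoc (l : List V) (v : V) : Phi A w t (l ++ [v]) = step A w t (Phi A w t l) v := by
  unfold Phi
  rw [List.foldl_append]
  rfl

theorem step_ends (g : List V) (v : V) : ∃ g₀, step A w t g v = g₀ ++ [v] := by
  obtain ⟨i, heq, ⟨hi1, hi2, hi3, _⟩, _⟩ := step_spec A w t g v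
  have hlen : (step A w t g v).length = i := by rw [heq, List.length_take]; omega
  have hne : step A w t g v ≠ [] := by
    intro h; rw [h] at hlen; simp at hlen; omega
  have hlast : (step A w t g v).getLast hne = v := by
    rw [List.getLast_eq_getElem, ← List.getD_eq_getElem _ A.vI, hlen, heq,
      getD_take' _ _ _ _ (by omega)]
    exact hi3
  refine ⟨(step A w t g v).dropLast, ?_⟩
  conv_lhs => rw [← List.dropLast_append_getLast hne]
  rw [hlast]

end AEProof

namespace AEProof

variable {V : Type} [Fintype V] (A : Arena V) (σ : List V → V) (w : V → V → ℤ) (t : ℕ)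

theorem step_nil (v : V) : step A w t [] v = [v] := by
  obtain ⟨i, heq, ⟨h1, h2, _, _⟩, _⟩ := step_spec A w t [] v
  simp only [List.nil_append, List.length_cons, List.length_nil] at h2
  have : i = 1 := by omega
  rw [heq, this]
  simp

theorem getLast_eq_getD {g : List V} (hg : g ≠ []) (d : V) :
    g.getLast hg = g.getD (g.length - 1) d := by
  have hpos : 1 ≤ g.length := List.length_pos_iff.mpr hg
  rw [List.getLast_eq_getElem, List.getD_eq_getElem _ _ (by omega)]

theorem final (hσ : A.WinningStrategy A.V0 (AvgEnergyL w (t : ℝ)) σ) :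
    ∃ (cap : ℕ) (σ' : List V → V), A.WinningStrategy A.V0 (EnergyLU w cap) σ' := by
  classical
  obtain ⟨L, hL⟩ := bounded_len A σ w t hσ (Fintype.card V * (t + 1))
  set Cw : ℕ := Finset.sup Finset.univ (fun p : V × V => (w p.1 p.2).toNat) with hCw
  have hwC : ∀ u v, w u v ≤ (Cw : ℤ) := by
    intro u v
    have h1 : (w u v).toNat ≤ Cw :=
      Finset.le_sup (f := fun p : V × V => (w p.1 p.2).toNat) (Finset.mem_univ (u, v))
    calc w u v ≤ ((w u v).toNat : ℤ) := Int.self_le_toNat _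
      _ ≤ (Cw : ℤ) := by exact_mod_cast h1
  refine ⟨L * Cw, fun h => σ (Phi A w t h), ?_, ?_⟩
  · -- it is a strategy
    intro h v hv
    show A.E v (σ (Phi A w t (h ++ [v])))
    rw [Phi_snoc]
    obtain ⟨g₀, hg₀⟩ := step_ends A w t (Phi A w t h) v
    rw [hg₀]
    exact hσ.1 g₀ v hv
  · -- it is winning for the bounded energy objective
    intro ρ hp hc
    have inv : ∀ n, LG A σ (Phi A w t (prefixList ρ n)) ∧
        (Phi A w t (prefixList ρ n)).getD ((Phi A w t (prefixList ρ n)).length - 1) A.vI = ρ n ∧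
        ELl w (Phi A w t (prefixList ρ n)) = EL w ρ n ∧
        DLows A w t (Phi A w t (prefixList ρ n)) := by
      intro n
      induction n with
      | zero =>
        have hpl0 : prefixList ρ 0 = [ρ 0] := by simp [prefixList, List.range_succ]
        have hPhi0 : Phi A w t (prefixList ρ 0) = [ρ 0] := by
          rw [hpl0]
          show step A w t [] (ρ 0) = [ρ 0]
          exact step_nil A w t (ρ 0)
        rw [hPhi0]
        refine ⟨⟨by simp, by simp [hp.1], ?_⟩, by simp, by simp [ELl, EL], ?_⟩
        · intro i hi; simp at hi
        · intro a b hab hb; simp at hb; omega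
      | succ n ih =>
        obtain ⟨hLGg, hlastg, hELg, hDLg⟩ := ih
        set g := Phi A w t (prefixList ρ n) with hg
        set v := ρ (n + 1) with hv
        have hgne : g ≠ [] := hLGg.1
        have hglen : 1 ≤ g.length := List.length_pos_iff.mpr hgne
        have hPhiS : Phi A w t (prefixList ρ (n + 1)) = step A w t g v := by
          rw [prefixList_succ, Phi_snoc]
        have hELg' : ELl w (g ++ [v]) = EL w ρ (n + 1) := by
          rw [ELl_snoc w g hgne v, getLast_eq_getD hgne A.vI, hlastg, hELg,
            show EL w ρ (n + 1) = EL w ρ n + w (ρ n) (ρ (n + 1)) from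
              Finset.sum_range_succ _ n]
        have hLGg' : LG A σ (g ++ [v]) := by
          apply LG_snoc A σ hLGg v
          · rw [hlastg]; exact hp.2 n
          · intro hm
            rw [hlastg] at hm
            exact hc n hm
        obtain ⟨i, heq, ⟨hi1, hi2, hi3, hi4⟩, hmin⟩ := step_spec A w t g v
        rw [hPhiS, heq]
        have hg'len : (g ++ [v]).length = g.length + 1 := by simp
        have htlen : ((g ++ [v]).take i).length = i := by
          rw [List.length_take]; omega
        refine ⟨LG_take A σ hLGg' i hi1, ?_, ?_, ?_⟩
        · rw [htlen, getD_take' _ _ _ _ (by omega)]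
          exact hi3
        · rw [hi4]; exact hELg'
        · -- distinct low configurations
          intro a b hab hblen hlowb heqab
          rw [htlen] at hblen
          rw [List.take_take, inf_eq_left.mpr (by omega : b + 1 ≤ i)] at hlowb
          rw [List.take_take, List.take_take, inf_eq_left.mpr (by omega : a + 1 ≤ i),
            inf_eq_left.mpr (by omega : b + 1 ≤ i)] at heqab
          rw [getD_take' _ _ _ _ (by omega : a < i), getD_take' _ _ _ _ (by omega : b < i)]
          by_cases hbg : b < g.length
          · -- both positions lie in g
            have e1 : (g ++ [v]).take (b + 1) = g.take (b + 1) :=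
              List.take_append_of_le_length (by omega)
            have e2 : (g ++ [v]).take (a + 1) = g.take (a + 1) :=
              List.take_append_of_le_length (by omega)
            rw [e1] at hlowb heqab
            rw [e2] at heqab
            rw [List.getD_append _ _ _ _ (by omega), List.getD_append _ _ _ _ hbg]
            exact hDLg a b hab hbg hlowb heqab
          · -- b is the new position
            have hbeq : b = g.length := by omega
            have hfull : (g ++ [v]).take (b + 1) = g ++ [v] := by
              rw [show b + 1 = (g ++ [v]).length by omega, List.take_length]
            rw [hfull] at hlowb heqab
            have hgdb : (g ++ [v]).getD b A.vI = v := by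
              rw [hbeq, List.getD_append_right _ _ _ _ (le_refl _)]
              simp
            intro hcon
            have hQ : Q A w (g ++ [v]) v (a + 1) := by
              refine ⟨by omega, by omega, ?_, heqab⟩
              rw [Nat.add_sub_cancel, hcon]
              exact hgdb
            have := hmin hlowb (a + 1) hQ
            omega
    intro n
    constructor
    · -- lower bound
      obtain ⟨hLG, _, hEL, _⟩ := inv n
      rw [← hEL]
      exact ELl_nonneg_of_LG A σ w t hσ hLG
    · -- upper bound
      obtain ⟨hLG, _, hEL, hDL⟩ := inv n
      have hlowK := lows_le_K A σ w t hσ hLG hDL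
      have hlen := hL _ hLG hlowK
      have hbnd := ELl_nonneg_bound w (Cw : ℤ) (by exact_mod_cast Nat.zero_le Cw) hwC
        (Phi A w t (prefixList ρ n))
      rw [hEL] at hbnd
      calc EL w ρ n ≤ ((Phi A w t (prefixList ρ n)).length : ℤ) * (Cw : ℤ) := hbnd
        _ ≤ (L : ℤ) * (Cw : ℤ) := by
            apply mul_le_mul_of_nonneg_right _ (by positivity)
            exact_mod_cast hlen
        _ = ((L * Cw : ℕ) : ℤ) := by push_cast; ring

end AEProof

/-- From a winning strategy for the lower-bounded average-energy
objective one obtains a capacity and a winning strategy for the lower- and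
upper-bounded energy objective. -/
theorem exists_cap_of_winning_avgEnergyL {V : Type} [Fintype V] (A : Arena V)
    (w : V → V → ℤ) (t : ℕ) (σ : List V → V)
    (hσ : A.WinningStrategy A.V0 (AvgEnergyL w (t : ℝ)) σ) :
    ∃ (cap : ℕ) (σ' : List V → V), A.WinningStrategy A.V0 (EnergyLU w cap) σ' := by
  exact AEProof.final A σ w t hσ
end

section
/- Let A be an arena with recharge weight function w, cap ∈ ℕ, and let M = ({0,…,cap} ∪ {⊥}, cap, Upd) be the memory structure with Upd(⊥,(v,v')) = ⊥ and, for c ∈ {0,…,cap}: Upd(c,(v,v')) = cap if (v,v') is labelled R, Upd(c,(v,v')) = c + w(v,v') if c + w(v,v') ≥ 0, and Upd(c,(v,v')) = ⊥ otherwise. Let ρ = v_0 v_1 v_2 ⋯ be a play in A with extended play (v_0,m_0)(v_1,m_1)(v_2,m_2)⋯ in A×M. Then for every n: (1) if EL_cap(v_0⋯v_s) ≥ 0 for all s ≤ n, then m_n = EL_cap(v_0⋯v_n); (2) if EL_cap(v_0⋯v_s) < 0 for some s ≤ n, then m_n = ⊥. -/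
/-- The memory structure with states `{0, …, cap} ∪ {⊥}` (`⊥` is `none`), initial
state `cap`, that tracks the recharge energy level. -/
def rechargeMem {V : Type} (w : V → V → Option ℤ) (cap : ℕ) :
    Mem V (Option (Fin (cap + 1))) where
  mI := some (Fin.last cap)
  upd := fun m u v =>
    match m with
    | none => none
    | some c =>
      match w u v with
      | none => some (Fin.last cap)
      | some k =>
        if h : 0 ≤ ((c : ℕ) : ℤ) + k ∧ ((c : ℕ) : ℤ) + k ≤ (cap : ℤ) then
          some ⟨(((c : ℕ) : ℤ) + k).toNat, by omega⟩
        else none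

/-- The memory structure `rechargeMem` correctly tracks the recharge
energy level: as long as it is non-negative the memory state equals it, and once it
has been negative the memory state is `⊥`. -/
theorem rechargeMem_tracks {V : Type} [Fintype V] (A : Arena V)
    (w : V → V → Option ℤ) (hw : RechargeWeights A w) (cap : ℕ)
    (ρ : ℕ → V) (hρ : A.Play ρ) (n : ℕ) :
    ((∀ s ≤ n, 0 ≤ ELcap w cap ρ s) →
      ∃ c : Fin (cap + 1), Mem.track (rechargeMem w cap) ρ n = some c ∧
        ((c : ℕ) : ℤ) = ELcap w cap ρ n) ∧
    ((∃ s ≤ n, ELcap w cap ρ s < 0) → Mem.track (rechargeMem w cap) ρ n = none) := by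
  induction n with
  | zero =>
    constructor
    · intro _
      exact ⟨Fin.last cap, rfl, by simp [ELcap, Fin.last]⟩
    · rintro ⟨s, hs, hneg⟩
      interval_cases s
      simp [ELcap] at hneg
      omega
  | succ n ih =>
    have hEL : ∀ k : ℤ, w (ρ n) (ρ (n + 1)) = some k →
        ELcap w cap ρ (n + 1) = ELcap w cap ρ n + k := by
      intro k hk
      simp [ELcap, hk]
    have hELnone : w (ρ n) (ρ (n + 1)) = none → ELcap w cap ρ (n + 1) = (cap : ℤ) := by
      intro hk; simp [ELcap, hk]
    constructor
    · intro hpos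
      obtain ⟨c, hc, hcv⟩ := ih.1 (fun s hs => hpos s (le_trans hs (Nat.le_succ n)))
      rw [show Mem.track (rechargeMem w cap) ρ (n + 1) =
        Mem.upd (rechargeMem w cap) (Mem.track (rechargeMem w cap) ρ n) (ρ n) (ρ (n + 1))
        from rfl, hc]
      cases hwk : w (ρ n) (ρ (n + 1)) with
      | none =>
        refine ⟨Fin.last cap, ?_, ?_⟩
        · simp [rechargeMem, hwk]
        · rw [hELnone hwk]; simp [Fin.last]
      | some k =>
        have hk0 : k ≤ 0 := hw _ _ (hρ.2 n) k hwk
        have h1 : 0 ≤ ((c : ℕ) : ℤ) + k := by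
          rw [hcv, ← hEL k hwk]; exact hpos (n + 1) le_rfl
        have hle : (c : ℕ) ≤ cap := Nat.lt_succ_iff.mp c.isLt
        have h2 : ((c : ℕ) : ℤ) + k ≤ (cap : ℤ) := by omega
        refine ⟨⟨(((c : ℕ) : ℤ) + k).toNat, by omega⟩, ?_, ?_⟩
        · simp [rechargeMem, hwk, h1, h2]
        · rw [hEL k hwk]; simp only [Fin.val_mk]; omega
    · rintro ⟨s, hs, hneg⟩
      rw [show Mem.track (rechargeMem w cap) ρ (n + 1) =
        Mem.upd (rechargeMem w cap) (Mem.track (rechargeMem w cap) ρ n) (ρ n) (ρ (n + 1))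
        from rfl]
      rcases Nat.lt_succ_iff_lt_or_eq.mp (Nat.lt_succ_of_le hs) with hlt | heq
      · rw [ih.2 ⟨s, Nat.lt_succ_iff.mp hlt, hneg⟩]; rfl
      · subst heq
        by_cases hall : ∀ t ≤ n, 0 ≤ ELcap w cap ρ t
        · obtain ⟨c, hc, hcv⟩ := ih.1 hall
          rw [hc]
          cases hwk : w (ρ n) (ρ (n + 1)) with
          | none =>
            exfalso; rw [hELnone hwk] at hneg; omega
          | some k =>
            have h1 : ¬ (0 ≤ ((c : ℕ) : ℤ) + k ∧ ((c : ℕ) : ℤ) + k ≤ (cap : ℤ)) := by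
              rw [hcv, ← hEL k hwk]; omega
            simp [rechargeMem, hwk, h1]
        · push_neg at hall
          obtain ⟨t, ht, htneg⟩ := hall
          rw [ih.2 ⟨t, ht, htneg⟩]; rfl
end

section
/- Let A be an arena with recharge weight function w, cap ∈ ℕ, t ∈ ℕ, and let M be the memory structure with states {0,…,cap} ∪ {⊥}, initial state cap, Upd(⊥,e) = ⊥, and Upd(c,(v,v')) = cap if (v,v') is labelled R, = c + w(v,v') if c + w(v,v') ≥ 0, = ⊥ otherwise. Define the weight function w' on A×M by w'((v,c),(v',m)) = c for c ∈ {0,…,cap} and w'((v,⊥),(v',⊥)) = t+1. Let ρ = v_0 v_1 v_2 ⋯ be a play in A with extended play ρ' = (v_0,m_0)(v_1,m_1)⋯. Then: (1) if EL_cap(v_0⋯v_s) ≥ 0 for all s, then limsup_{n→∞} (1/n) EL'((v_0,m_0)⋯(v_{n−1},m_{n−1})) = limsup_{n→∞} (1/n) Σ_{i=0}^{n−1} EL_cap(v_0⋯v_i), where EL' is the sum of w'-weights along the extended play prefix; (2) if EL_cap(v_0⋯v_s) < 0 for some s, then limsup_{n→∞} (1/n) EL'((v_0,m_0)⋯(v_{n−1},m_{n−1}))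 = t+1. -/
/-- The weight function `w'` on the expanded arena: the weight of an edge is the
energy level stored in the memory component of its source, and `t + 1` at `⊥`. -/
def rechargeMPweight {V : Type} (cap t : ℕ) :
    (V × Option (Fin (cap + 1))) → (V × Option (Fin (cap + 1))) → ℤ :=
  fun p _ =>
    match p.2 with
    | some c => ((c : ℕ) : ℤ)
    | none => (t : ℤ) + 1


section RechargeAux

variable {V : Type} (A : Arena V) (w : V → V → Option ℤ) (cap : ℕ) (ρ : ℕ → V)

lemma ELcap_le_cap (hw : RechargeWeights A w) (hρ : A.Play ρ) :
    ∀ n, ELcap w cap ρ n ≤ (cap : ℤ) := by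
  intro n; induction n with
  | zero => simp [ELcap]
  | succ n ih =>
    rcases hk : w (ρ n) (ρ (n + 1)) with _ | k
    · simp [ELcap, hk]
    · have := hw (ρ n) (ρ (n + 1)) (hρ.2 n) k hk
      simp only [ELcap, hk]
      omega

lemma rechargeMem_track_eq (hw : RechargeWeights A w) (hρ : A.Play ρ) :
    ∀ n, (∀ i, i ≤ n → 0 ≤ ELcap w cap ρ i) →
      ∃ c : Fin (cap + 1), Mem.track (rechargeMem w cap) ρ n = some c ∧
        ((c : ℕ) : ℤ) = ELcap w cap ρ n := by
  intro n; induction n with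
  | zero =>
    intro _
    exact ⟨Fin.last cap, rfl, by simp [ELcap, Fin.last]⟩
  | succ n ih =>
    intro h
    obtain ⟨c, hc, hval⟩ := ih (fun i hi => h i (Nat.le_succ_of_le hi))
    have hle := ELcap_le_cap A w cap ρ hw hρ (n + 1)
    have h0 := h (n + 1) le_rfl
    rcases hk : w (ρ n) (ρ (n + 1)) with _ | k
    · refine ⟨Fin.last cap, ?_, ?_⟩
      · rw [Mem.track, hc]; simp [rechargeMem, hk]
      · simp [ELcap, hk, Fin.last]
    · have hE : ELcap w cap ρ (n + 1) = ELcap w cap ρ n + k := by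
        simp [ELcap, hk]
      have hcond : 0 ≤ ((c : ℕ) : ℤ) + k ∧ ((c : ℕ) : ℤ) + k ≤ (cap : ℤ) := by
        rw [hval, ← hE]; exact ⟨h0, hle⟩
      refine ⟨⟨(((c : ℕ) : ℤ) + k).toNat, by omega⟩, ?_, ?_⟩
      · rw [Mem.track, hc]; simp [rechargeMem, hk, hcond]
      · have := Int.toNat_of_nonneg hcond.1
        simp only [Fin.val_mk]
        omega

lemma rechargeMem_track_none (hw : RechargeWeights A w) (hρ : A.Play ρ)
    (m : ℕ) (hpos : ∀ i, i ≤ m → 0 ≤ ELcap w cap ρ i)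
    (hneg : ELcap w cap ρ (m + 1) < 0) :
    ∀ j, Mem.track (rechargeMem w cap) ρ (m + 1 + j) = none := by
  obtain ⟨c, hc, hval⟩ := rechargeMem_track_eq A w cap ρ hw hρ m hpos
  have base : Mem.track (rechargeMem w cap) ρ (m + 1) = none := by
    rcases hk : w (ρ m) (ρ (m + 1)) with _ | k
    · exfalso
      have : ELcap w cap ρ (m + 1) = (cap : ℤ) := by simp [ELcap, hk]
      omega
    · have hE : ELcap w cap ρ (m + 1) = ELcap w cap ρ m + k := by
        simp [ELcap, hk]
      have hcond : ¬ (0 ≤ ((c : ℕ) : ℤ) + k ∧ ((c : ℕ) : ℤ) + k ≤ (cap : ℤ)) := by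
        rw [hval, ← hE]; omega
      rw [Mem.track, hc]; simp [rechargeMem, hk, hcond]
  intro j; induction j with
  | zero => exact base
  | succ j ih =>
    have : m + 1 + (j + 1) = (m + 1 + j) + 1 := by omega
    rw [this, Mem.track, ih]; rfl

end RechargeAux

/-- Along the extended play, the limsup of the mean of the
`w'`-weights equals the limsup of the averages of the recharge energy levels if the
recharge energy level never goes negative, and equals `t + 1` otherwise. -/
theorem rechargeMem_limsup {V : Type} [Fintype V] (A : Arena V)
    (w : V → V → Option ℤ) (hw : RechargeWeights A w) (cap t : ℕ)
    (ρ : ℕ → V) (hρ : A.Play ρ) :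
    ((∀ s, 0 ≤ ELcap w cap ρ s) →
      Filter.limsup
        (fun n => (((EL (rechargeMPweight cap t) (extendPlay (rechargeMem w cap) ρ) n : ℝ)
          / (n : ℝ)) : EReal)) Filter.atTop =
      Filter.limsup (fun n => (avgELcap w cap ρ n : EReal)) Filter.atTop) ∧
    ((∃ s, ELcap w cap ρ s < 0) →
      Filter.limsup
        (fun n => (((EL (rechargeMPweight cap t) (extendPlay (rechargeMem w cap) ρ) n : ℝ)
          / (n : ℝ)) : EReal)) Filter.atTop = (((t : ℝ) + 1 : ℝ) : EReal)) := by
  constructor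
  · -- Case 1: energy never negative
    intro h
    have key : ∀ n, EL (rechargeMPweight cap t) (extendPlay (rechargeMem w cap) ρ) n
        = ∑ i ∈ Finset.range n, ELcap w cap ρ i := by
      intro n
      unfold EL
      refine Finset.sum_congr rfl fun i _ => ?_
      obtain ⟨c, hc, hval⟩ := rechargeMem_track_eq A w cap ρ hw hρ i (fun j _ => h j)
      simp [rechargeMPweight, extendPlay, hc, hval]
    congr 1
    funext n
    have h2 : ((EL (rechargeMPweight cap t) (extendPlay (rechargeMem w cap) ρ) n : ℤ) : ℝ)
        / (n : ℝ) = avgELcap w cap ρ n := by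
      rw [key]; unfold avgELcap; push_cast; ring
    rw [← EReal.coe_div, h2]
  · -- Case 2: energy goes negative
    intro h
    have hs : ELcap w cap ρ (Nat.find h) < 0 := Nat.find_spec h
    have hmin : ∀ i, i < Nat.find h → 0 ≤ ELcap w cap ρ i :=
      fun i hi => le_of_not_gt (Nat.find_min h hi)
    obtain ⟨m, hm⟩ : ∃ m, Nat.find h = m + 1 := by
      rcases hn : Nat.find h with _ | m
      · exfalso; rw [hn] at hs
        have : ELcap w cap ρ 0 = (cap : ℤ) := rfl
        omega
      · exact ⟨m, rfl⟩
    rw [hm] at hs hmin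
    have hnone := rechargeMem_track_none A w cap ρ hw hρ m
      (fun i hi => hmin i (by omega)) hs
    set g : ℕ → ℤ := fun n =>
      EL (rechargeMPweight cap t) (extendPlay (rechargeMem w cap) ρ) n with hg
    have gstep : ∀ j, g (m + 1 + j) = g (m + 1) + j * ((t : ℤ) + 1) := by
      intro j; induction j with
      | zero => simp
      | succ j ih =>
        have h1 : m + 1 + (j + 1) = (m + 1 + j) + 1 := by omega
        have h2 : g ((m + 1 + j) + 1) = g (m + 1 + j)
            + rechargeMPweight cap t (extendPlay (rechargeMem w cap) ρ (m + 1 + j))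
              (extendPlay (rechargeMem w cap) ρ (m + 1 + j + 1)) := by
          simp [hg, EL, Finset.sum_range_succ]
        have h3 : rechargeMPweight cap t (extendPlay (rechargeMem w cap) ρ (m + 1 + j))
            (extendPlay (rechargeMem w cap) ρ (m + 1 + j + 1)) = (t : ℤ) + 1 := by
          simp [rechargeMPweight, extendPlay, hnone j]
        rw [h1, h2, h3, ih]
        push_cast
        ring
    set C : ℝ := (g (m + 1) : ℝ) - ((m : ℝ) + 1) * ((t : ℝ) + 1) with hC
    have heq : ∀ n, m + 1 ≤ n → ((g n : ℝ)) / (n : ℝ) = ((t : ℝ) + 1) + C / (n : ℝ) := by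
      intro n hn
      obtain ⟨j, rfl⟩ : ∃ j, n = m + 1 + j := ⟨n - (m + 1), by omega⟩
      have hn0 : ((m + 1 + j : ℕ) : ℝ) ≠ 0 := by positivity
      rw [gstep j]
      field_simp
      push_cast
      ring
    have htend : Filter.Tendsto
        (fun n : ℕ => ((g n : ℝ)) / (n : ℝ)) Filter.atTop (nhds ((t : ℝ) + 1)) := by
      have hbase : Filter.Tendsto (fun n : ℕ => ((t : ℝ) + 1) + C / (n : ℝ))
          Filter.atTop (nhds (((t : ℝ) + 1) + 0)) :=
        Filter.Tendsto.add tendsto_const_nhds (tendsto_const_div_atTop_nhds_zero_nat C)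
      rw [add_zero] at hbase
      refine hbase.congr' ?_
      filter_upwards [Filter.eventually_ge_atTop (m + 1)] with n hn
      exact (heq n hn).symm
    have : Filter.Tendsto
        (fun n : ℕ => (((g n : ℝ) / (n : ℝ) : ℝ) : EReal)) Filter.atTop
        (nhds (((t : ℝ) + 1 : ℝ) : EReal)) := EReal.tendsto_coe.mpr htend
    exact this.limsup_eq
end
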